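/- arXiv:2206.03005 — 4 statements merged into one kernel-verified Lean document; each statement's English description precedes it below -/
import Mathlib

section
/- Let K be a finite simplicial complex with a metric d. For any ε > 0 and any natural number m there exists a continuous map F : K → [0,1]^{m−1} such that for every point p ∈ [0,1]^{m−1} one has widim_ε(F⁻¹(p), d) ≤ (dim K)/m. -/
open scoped ENNReal

/-- An abstract finite simplicial complex on a vertex type `V`: a finite, downward closed
family of nonempty finite sets of vertices. -/
structure FinSimpComplex (V : Type) where
  faces : Finset (Finset V)
  nonempty_of_mem : ∀ s ∈ faces, s.Nonempty
  down_closed : ∀ s ∈ faces, ∀ t ⊆ s, t.Nonempty → t ∈ faces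

namespace FinSimpComplex

/-- The geometric realization of `K`: the set of barycentric coordinate functions supported
on a face of `K`. -/
def space {V : Type} [Fintype V] (K : FinSimpComplex V) : Set (V → ℝ) :=
  {x | (∀ v, 0 ≤ x v) ∧ (∑ v, x v = 1) ∧ ∃ s ∈ K.faces, ∀ v, x v ≠ 0 → v ∈ s}

/-- `K` has dimension at most `n`. -/
def dimLE {V : Type} (K : FinSimpComplex V) (n : ℕ) : Prop :=
  ∀ s ∈ K.faces, s.card ≤ n + 1

/-- The dimension of `K` (with value `0` for the empty complex). -/
def dim {V : Type} (K : FinSimpComplex V) : ℕ :=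
  K.faces.sup fun s => s.card - 1

/-- The vertex set of `K`. -/
def vertexSet {V : Type} [Fintype V] [DecidableEq V] (K : FinSimpComplex V) : Finset V :=
  Finset.univ.filter fun v => {v} ∈ K.faces

/-- The open star of the vertex `v` in the realization of `K`: the union of the interiors of
the simplices containing `v`, i.e. the points whose `v`-th barycentric coordinate is nonzero. -/
def star {V : Type} [Fintype V] (K : FinSimpComplex V) (v : V) : Set ↥K.space :=
  {x | (x : V → ℝ) v ≠ 0}

/-- The full subcomplex of `K` spanned by the vertex set `A`. -/
def fullSub {V : Type} [DecidableEq V] (K : FinSimpComplex V) (A : Finset V) :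
    FinSimpComplex V where
  faces := K.faces.filter fun s => s ⊆ A
  nonempty_of_mem s hs := K.nonempty_of_mem s (Finset.mem_filter.1 hs).1
  down_closed s hs t hts htne := Finset.mem_filter.2
    ⟨K.down_closed s (Finset.mem_filter.1 hs).1 t hts htne,
     hts.trans (Finset.mem_filter.1 hs).2⟩

end FinSimpComplex

/-- The diameter of a set with respect to a distance function `d`, valued in `ℝ≥0∞`. -/
noncomputable def diamOn {X : Type*} (d : X → X → ℝ) (S : Set X) : ℝ≥0∞ :=
  ⨆ x ∈ S, ⨆ y ∈ S, ENNReal.ofReal (d x y)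

/-- `f` is an `ε`-embedding w.r.t. `d`: it is continuous and all its fibers have
`d`-diameter `< ε`. -/
def IsEpsEmbedding {X P : Type*} [TopologicalSpace X] [TopologicalSpace P]
    (d : X → X → ℝ) (ε : ℝ) (f : X → P) : Prop :=
  Continuous f ∧ ∀ p : P, diamOn d (f ⁻¹' {p}) < ENNReal.ofReal ε

/-- The `ε`-width dimension of `X` w.r.t. `d`: the minimal integer `n ≥ 0` such that there is
an `ε`-embedding of `X` into some at most `n`-dimensional finite simplicial complex
(`⊤` if no such embedding exists). -/
noncomputable def widim (X : Type*) [TopologicalSpace X] (d : X → X → ℝ) (ε : ℝ) : ℝ≥0∞ :=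
  sInf {r : ℝ≥0∞ | ∃ n : ℕ, (n : ℝ≥0∞) = r ∧
    ∃ (k : ℕ) (K : FinSimpComplex (Fin k)) (f : X → ↥K.space),
      K.dimLE n ∧ IsEpsEmbedding d ε f}

/-- The dynamical distance `d_N(x,y) = max_{0 ≤ n < N} d(Tⁿx, Tⁿy)`. -/
noncomputable def dynDist {X : Type*} (d : X → X → ℝ) (T : X → X) (N : ℕ) (x y : X) : ℝ :=
  (Finset.range N).fold max 0 fun n => d (T^[n] x) (T^[n] y)

/-- The mean dimension `mdim(X,T) = lim_{ε→0} lim_{N→∞} widim_ε(X,d_N)/N`; the limit in `N`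
exists and equals the infimum by subadditivity, and the limit in `ε` is the supremum
by monotonicity. -/
noncomputable def mdim (X : Type*) [TopologicalSpace X] (d : X → X → ℝ) (T : X → X) : ℝ≥0∞ :=
  ⨆ (ε : ℝ) (_ : 0 < ε), ⨅ (N : ℕ) (_ : 0 < N), widim X (dynDist d T N) ε / (N : ℝ≥0∞)

/-- The relative mean dimension of a factor map `π`:
`mdim(π,T) = lim_{ε→0} lim_{N→∞} (sup_y widim_ε(π⁻¹(y), d_N))/N`. -/
noncomputable def mdimRel {X Y : Type*} [TopologicalSpace X] (d : X → X → ℝ)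
    (T : X → X) (π : X → Y) : ℝ≥0∞ :=
  ⨆ (ε : ℝ) (_ : 0 < ε), ⨅ (N : ℕ) (_ : 0 < N),
    (⨆ y : Y, widim ↥(π ⁻¹' {y}) (fun a b => dynDist d T N a.1 b.1) ε) / (N : ℝ≥0∞)

/-- The upper mean dimension of a subset `A ⊆ X`:
`lim_{ε→0} limsup_{N→∞} widim_ε(A,d_N)/N`. -/
noncomputable def umdim {X : Type*} [TopologicalSpace X] (d : X → X → ℝ) (T : X → X)
    (A : Set X) : ℝ≥0∞ :=
  ⨆ (ε : ℝ) (_ : 0 < ε),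
    Filter.limsup (fun N : ℕ =>
      widim ↥A (fun a b => dynDist d T N a.1 b.1) ε / (N : ℝ≥0∞)) Filter.atTop

/-- The lower mean dimension of a subset `A ⊆ X`:
`lim_{ε→0} liminf_{N→∞} widim_ε(A,d_N)/N`. -/
noncomputable def lmdim {X : Type*} [TopologicalSpace X] (d : X → X → ℝ) (T : X → X)
    (A : Set X) : ℝ≥0∞ :=
  ⨆ (ε : ℝ) (_ : 0 < ε),
    Filter.liminf (fun N : ℕ =>
      widim ↥A (fun a b => dynDist d T N a.1 b.1) ε / (N : ℝ≥0∞)) Filter.atTop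

/-- A factor map between dynamical systems: a continuous equivariant surjection. -/
structure IsFactorMap {X Y : Type*} [TopologicalSpace X] [TopologicalSpace Y]
    (T : X → X) (S : Y → Y) (π : X → Y) : Prop where
  continuous : Continuous π
  surjective : Function.Surjective π
  equivariant : ∀ x, π (T x) = S (π x)

/-- The orbit capacity `ocap(A) = lim_{N→∞} (1/N) sup_x Σ_{n<N} 1_A(Tⁿx)`; the limit exists
and equals the infimum by subadditivity. -/
noncomputable def ocap {X : Type*} (T : X → X) (A : Set X) : ℝ≥0∞ :=
  ⨅ (N : ℕ) (_ : 0 < N),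
    (⨆ x : X, ∑ n ∈ Finset.range N, A.indicator (fun _ => (1 : ℝ≥0∞)) (T^[n] x)) / (N : ℝ≥0∞)

/-- The small boundary property. -/
def SmallBoundaryProperty {Y : Type*} [TopologicalSpace Y] (S : Y → Y) : Prop :=
  ∀ y : Y, ∀ U : Set Y, IsOpen U → y ∈ U →
    ∃ V : Set Y, IsOpen V ∧ y ∈ V ∧ V ⊆ U ∧ ocap S (frontier V) = 0

/-- `d` is a metric on `X` compatible with the given topology. -/
def IsCompatibleMetric {X : Type*} [t : TopologicalSpace X] (d : X → X → ℝ) : Prop :=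
  ∃ m : MetricSpace X,
    m.toPseudoMetricSpace.toUniformSpace.toTopologicalSpace = t ∧
    ∀ x y, @dist X m.toPseudoMetricSpace.toDist x y = d x y


noncomputable section
set_option linter.unusedSectionVars false
namespace GromovAux

open Finset

variable {V : Type} [Fintype V] [DecidableEq V]

/-- rank of a vertex -/
def rk (v : V) : ℕ := Fintype.equivFin V v

lemma rk_inj : Function.Injective (rk (V := V)) := fun a b h => by
  have := (Fintype.equivFin V).injective (by ext; exact h)
  exact this

/-- rank of an optional vertex, with `none` at the bottom -/
def rkO : Option V → ℕ
  | none => 0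
  | some v => rk v + 1

/-- cumulative coordinate -/
def Tc (a : Option V) (x : V → ℝ) : ℝ :=
  ∑ u ∈ Finset.univ.filter (fun u => rk u + 1 ≤ rkO a), x u

lemma Tc_none (x : V → ℝ) : Tc (none : Option V) x = 0 := by
  simp [Tc, rkO]

lemma Tc_nonneg {x : V → ℝ} (hx : ∀ v, 0 ≤ x v) (a : Option V) : 0 ≤ Tc a x :=
  Finset.sum_nonneg fun u _ => hx u

lemma Tc_le_one {x : V → ℝ} (hx : ∀ v, 0 ≤ x v) (hs : ∑ v, x v = 1) (a : Option V) :
    Tc a x ≤ 1 := by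
  rw [← hs]
  exact Finset.sum_le_sum_of_subset_of_nonneg (Finset.filter_subset _ _) fun u _ _ => hx u

/-- predecessor in rank order -/
lemma rk_lt (v : V) : rk v < Fintype.card V := ((Fintype.equivFin V) v).isLt

def prevO (v : V) : Option V :=
  if h : rk v = 0 then none else
    some ((Fintype.equivFin V).symm ⟨rk v - 1, by have := rk_lt v; omega⟩)

lemma rkO_prevO (v : V) : rkO (prevO v) = rk v := by
  unfold prevO
  split
  next h => simp only [rkO]; omega
  next h =>
    show rk _ + 1 = rk v
    have : rk ((Fintype.equivFin V).symm ⟨rk v - 1, by have := rk_lt v; omega⟩) = rk v - 1 := by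
      simp only [rk, Equiv.apply_symm_apply]
    rw [this]; omega

lemma Tc_some_eq (v : V) (x : V → ℝ) : Tc (some v) x = Tc (prevO v) x + x v := by
  unfold Tc
  have h1 : Finset.univ.filter (fun u => rk u + 1 ≤ rkO (some v)) =
      (insert v (Finset.univ.filter (fun u => rk u + 1 ≤ rkO (prevO v))) : Finset V) := by
    ext u
    simp only [Finset.mem_filter, Finset.mem_univ, true_and, Finset.mem_insert, rkO_prevO]
    rw [show rkO (some v) = rk v + 1 from rfl]
    constructor
    · intro h
      rcases eq_or_lt_of_le (Nat.lt_succ_iff.mp h) with h' | h'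
      · exact Or.inl (rk_inj h')
      · exact Or.inr h'
    · rintro (rfl | h)
      · omega
      · omega
  rw [h1, Finset.sum_insert (by simp [rkO_prevO])]
  ring

end GromovAux

noncomputable section
set_option linter.unusedSectionVars false
namespace GromovAux2

open Finset

variable {X : Type} [TopologicalSpace X] {ι : Type} [Fintype ι] [DecidableEq ι]

/-- max of ψ outside S, at least 0 -/
def mxo (ψ : ι → X → ℝ) (S : Finset ι) (x : X) : ℝ :=
  (Finset.univ \ S).fold max 0 (fun i => ψ i x)

def phi (ψ : ι → X → ℝ) (S : Finset ι) (x : X) : ℝ :=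
  if h : S.Nonempty then max (S.inf' h (fun i => ψ i x) - mxo ψ S x) 0 else 0

lemma phi_nonneg (ψ : ι → X → ℝ) (S : Finset ι) (x : X) : 0 ≤ phi ψ S x := by
  unfold phi; split <;> simp

lemma mxo_nonneg (ψ : ι → X → ℝ) (S : Finset ι) (x : X) : 0 ≤ mxo ψ S x := by
  unfold mxo
  induction (Finset.univ \ S) using Finset.cons_induction with
  | empty => simp
  | cons a s ha ih => rw [Finset.fold_cons]; exact le_max_of_le_right ih

lemma le_mxo (ψ : ι → X → ℝ) {S : Finset ι} {i : ι} (hi : i ∉ S) (x : X) :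
    ψ i x ≤ mxo ψ S x := by
  unfold mxo
  have hmem : i ∈ Finset.univ \ S := by simp [hi]
  revert hmem
  induction (Finset.univ \ S) using Finset.cons_induction with
  | empty => simp
  | cons a s ha ih =>
    intro hmem
    rw [Finset.fold_cons]
    rcases Finset.mem_cons.1 hmem with rfl | h
    · exact le_max_left _ _
    · exact le_max_of_le_right (ih h)

lemma mxo_lt {ψ : ι → X → ℝ} {S : Finset ι} {x : X} {c : ℝ} (hc : 0 < c)
    (h : ∀ i ∉ S, ψ i x < c) : mxo ψ S x < c := by
  unfold mxo
  have h' : ∀ i ∈ Finset.univ \ S, ψ i x < c := fun i hi =>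
    h i (Finset.mem_sdiff.1 hi).2
  revert h'
  induction (Finset.univ \ S) using Finset.cons_induction with
  | empty => simp [hc]
  | cons a s ha ih =>
    intro h'
    rw [Finset.fold_cons]
    exact max_lt (h' a (Finset.mem_cons_self _ _)) (ih fun i hi => h' i (Finset.mem_cons.2 (Or.inr hi)))

lemma phi_pos_iff {ψ : ι → X → ℝ} {S : Finset ι} {x : X} :
    0 < phi ψ S x ↔ ∃ h : S.Nonempty, mxo ψ S x < S.inf' h (fun i => ψ i x) := by
  unfold phi
  split
  next h =>
    simp only [lt_max_iff, lt_self_iff_false, or_false, sub_pos]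
    exact ⟨fun hh => ⟨h, hh⟩, fun ⟨_, hh⟩ => hh⟩
  next h => simp [h]

lemma psi_pos_of_phi {ψ : ι → X → ℝ} {S : Finset ι} {x : X} (hp : 0 < phi ψ S x)
    {i : ι} (hi : i ∈ S) : 0 < ψ i x := by
  obtain ⟨h, hlt⟩ := phi_pos_iff.1 hp
  calc (0:ℝ) ≤ mxo ψ S x := mxo_nonneg _ _ _
    _ < S.inf' h (fun i => ψ i x) := hlt
    _ ≤ ψ i x := Finset.inf'_le _ hi

lemma psi_lt_of_phi {ψ : ι → X → ℝ} {S : Finset ι} {x : X} (hp : 0 < phi ψ S x)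
    {i : ι} (hi : i ∉ S) {j : ι} (hj : j ∈ S) : ψ i x < ψ j x := by
  obtain ⟨h, hlt⟩ := phi_pos_iff.1 hp
  calc ψ i x ≤ mxo ψ S x := le_mxo ψ hi x
    _ < S.inf' h (fun i => ψ i x) := hlt
    _ ≤ ψ j x := Finset.inf'_le _ hj

lemma phi_proper {ψ : ι → X → ℝ} {S S' : Finset ι} {x : X} (h1 : 0 < phi ψ S x)
    (h2 : 0 < phi ψ S' x) (hc : S.card = S'.card) : S = S' := by
  by_contra hne
  have hns : ¬ S ⊆ S' := fun hs => hne (Finset.eq_of_subset_of_card_le hs hc.ge)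
  have hns' : ¬ S' ⊆ S := fun hs => hne (Finset.eq_of_subset_of_card_le hs hc.le).symm
  obtain ⟨i, hiS, hiS'⟩ := Finset.not_subset.1 hns
  obtain ⟨j, hjS', hjS⟩ := Finset.not_subset.1 hns'
  have a1 : ψ i x < ψ j x := psi_lt_of_phi h2 hiS' hjS'
  have a2 : ψ j x < ψ i x := psi_lt_of_phi h1 hjS hiS
  linarith

lemma phi_cover [Nonempty ι] {ψ : ι → X → ℝ} {x : X} {n : ℕ}
    (hord : ∀ A : Finset ι, (∀ i ∈ A, 0 < ψ i x) → A.card ≤ n + 1)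
    (hcov : ∃ i, 0 < ψ i x) :
    ∃ S : Finset ι, S.Nonempty ∧ S.card ≤ n + 1 ∧ 0 < phi ψ S x := by
  classical
  obtain ⟨i₀, hi₀⟩ := hcov
  set t := Finset.univ.sup' Finset.univ_nonempty (fun i => ψ i x) with ht
  have htpos : 0 < t := lt_of_lt_of_le hi₀ (Finset.le_sup' (f := fun i => ψ i x) (Finset.mem_univ i₀))
  set S := Finset.univ.filter (fun i => ψ i x = t) with hS
  obtain ⟨imax, _, hmax⟩ := Finset.exists_mem_eq_sup' Finset.univ_nonempty (fun i => ψ i x)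
  have hSne : S.Nonempty := ⟨imax, by simp [hS, hmax.symm]; exact ht.symm⟩
  have hmemS : ∀ i ∈ S, ψ i x = t := fun i hi => (Finset.mem_filter.1 hi).2
  refine ⟨S, hSne, hord S (fun i hi => (hmemS i hi) ▸ htpos), ?_⟩
  rw [phi_pos_iff]
  refine ⟨hSne, ?_⟩
  have hinf : S.inf' hSne (fun i => ψ i x) = t := by
    apply le_antisymm
    · obtain ⟨i, hi⟩ := hSne
      exact le_trans (Finset.inf'_le _ hi) (hmemS i hi).le
    · exact Finset.le_inf' _ _ fun i hi => (hmemS i hi).ge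
  rw [hinf]
  apply mxo_lt htpos
  intro i hi
  have hle : ψ i x ≤ t := Finset.le_sup' (f := fun i => ψ i x) (Finset.mem_univ i)
  have : ψ i x ≠ t := fun h => hi (by simp [hS, h])
  exact lt_of_le_of_ne hle this

lemma continuous_inf' {ψ : ι → X → ℝ} (hψ : ∀ i, Continuous (ψ i)) (S : Finset ι)
    (h : S.Nonempty) : Continuous fun x => S.inf' h (fun i => ψ i x) :=
  Continuous.finset_inf'_apply h (fun i _ => hψ i)

lemma continuous_mxo {ψ : ι → X → ℝ} (hψ : ∀ i, Continuous (ψ i)) (S : Finset ι) :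
    Continuous (mxo ψ S) := by
  unfold mxo
  induction (Finset.univ \ S) using Finset.cons_induction with
  | empty => simpa using continuous_const
  | cons a s ha ih =>
    have : (fun x => (Finset.cons a s ha).fold max 0 (fun i => ψ i x))
        = fun x => max (ψ a x) (s.fold max 0 (fun i => ψ i x)) := by
      funext x; rw [Finset.fold_cons]
    rw [this]
    exact (hψ a).max ih

lemma continuous_phi {ψ : ι → X → ℝ} (hψ : ∀ i, Continuous (ψ i)) (S : Finset ι) :
    Continuous (phi ψ S) := by
  unfold phi
  split
  next h => exact (((continuous_inf' hψ S h).sub (continuous_mxo hψ S)).max continuous_const)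
  next h => exact continuous_const

end GromovAux2
noncomputable section
set_option linter.unusedSectionVars false
namespace GromovAux

open Finset

variable {V : Type} [Fintype V] [DecidableEq V]

def gg (N : ℕ) (a : Option V) (x : V → ℝ) : ℝ := (N : ℝ) * Tc a x

def inU (N : ℕ) (w : Option V → Fin (N+1)) (x : V → ℝ) : Prop :=
  w none = 0 ∧ ∀ a b : Option V,
    (gg N a x - ((w a : ℕ) : ℝ)) - (gg N b x - ((w b : ℕ) : ℝ)) < 1

lemma gg_none (N : ℕ) (x : V → ℝ) : gg N (none : Option V) x = 0 := by
  rw [gg, Tc_none, mul_zero]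

lemma U_cover (N : ℕ) (x : V → ℝ) (hx : ∀ v, 0 ≤ x v) (hs : ∑ v, x v = 1) :
    ∃ w : Option V → Fin (N+1), inU N w x := by
  have hg0 : ∀ a, 0 ≤ gg N a x := fun a => mul_nonneg (Nat.cast_nonneg N) (Tc_nonneg hx a)
  have hgN : ∀ a, gg N a x ≤ N := by
    intro a
    calc gg N a x = (N:ℝ) * Tc a x := rfl
      _ ≤ (N:ℝ) * 1 := mul_le_mul_of_nonneg_left (Tc_le_one hx hs a) (Nat.cast_nonneg N)
      _ = N := mul_one _
  have hceil : ∀ a, (⌈gg N a x⌉).toNat < N + 1 := by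
    intro a
    have h1 : ⌈gg N a x⌉ ≤ (N:ℤ) := Int.ceil_le.2 (by exact_mod_cast hgN a)
    omega
  have hcast : ∀ a, (((⌈gg N a x⌉).toNat : ℕ) : ℝ) = ((⌈gg N a x⌉ : ℤ) : ℝ) := by
    intro a
    have hnn : 0 ≤ ⌈gg N a x⌉ := Int.ceil_nonneg (hg0 a)
    exact_mod_cast congrArg (Int.cast : ℤ → ℝ) (Int.toNat_of_nonneg hnn)
  refine ⟨fun a => ⟨(⌈gg N a x⌉).toNat, hceil a⟩, ?_, ?_⟩
  · apply Fin.ext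
    show (⌈gg N (none : Option V) x⌉).toNat = 0
    rw [gg_none]
    simp
  · intro a b
    have key : ∀ e : Option V, gg N e x - ((⌈gg N e x⌉).toNat : ℝ) ≤ 0 ∧
        -1 < gg N e x - ((⌈gg N e x⌉).toNat : ℝ) := by
      intro e
      rw [hcast e]
      constructor
      · have := Int.le_ceil (gg N e x); linarith
      · have := Int.ceil_lt_add_one (gg N e x); linarith
    obtain ⟨h1a, h2a⟩ := key a
    obtain ⟨h1b, h2b⟩ := key b
    show (gg N a x - ((⌈gg N a x⌉).toNat : ℝ)) - (gg N b x - ((⌈gg N b x⌉).toNat : ℝ)) < 1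
    linarith

lemma U_mesh {N : ℕ} (hN : 0 < N) {w : Option V → Fin (N+1)} {x y : V → ℝ}
    (hxU : inU N w x) (hyU : inU N w y) (v : V) : |x v - y v| < 2 / N := by
  have hN' : (0:ℝ) < N := by exact_mod_cast hN
  have hdx : gg N (some v) x - gg N (prevO v) x = (N:ℝ) * x v := by
    rw [gg, gg, ← mul_sub, Tc_some_eq]; ring
  have hdy : gg N (some v) y - gg N (prevO v) y = (N:ℝ) * y v := by
    rw [gg, gg, ← mul_sub, Tc_some_eq]; ring
  have c1 := hxU.2 (some v) (prevO v)
  have c2 := hxU.2 (prevO v) (some v)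
  have c3 := hyU.2 (some v) (prevO v)
  have c4 := hyU.2 (prevO v) (some v)
  have h1 : (N:ℝ) * x v - (N:ℝ) * y v < 2 := by linarith
  have h2 : -2 < (N:ℝ) * x v - (N:ℝ) * y v := by linarith
  rw [abs_lt]
  constructor
  · have h3 : (-2)/(N:ℝ) < x v - y v := by
      rw [div_lt_iff₀ hN']
      nlinarith
    have h4 : (-2)/(N:ℝ) = -(2/(N:ℝ)) := by ring
    linarith
  · rw [lt_div_iff₀ hN']
    nlinarith

lemma U_count {N : ℕ} {x : V → ℝ} {n : ℕ} (hx : ∀ v, 0 ≤ x v) (hsum : ∑ v, x v = 1)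
    (hsupp : (Finset.univ.filter (fun v => x v ≠ 0)).card ≤ n + 1)
    (Wf : Finset (Option V → Fin (N+1))) (hWf : ∀ w ∈ Wf, inU N w x) :
    Wf.card ≤ n + 1 := by
  classical
  set s : Finset V := Finset.univ.filter (fun v => x v ≠ 0) with hsdef
  have hsum_s : ∑ v ∈ s, x v = 1 := by
    rw [hsdef, Finset.sum_filter_ne_zero, hsum]
  have hsne : s.Nonempty := by
    rcases s.eq_empty_or_nonempty with he | h
    · rw [he] at hsum_s; simp at hsum_s
    · exact h
  -- L1
  have L1 : ∀ a : Option V, Tc a x = ∑ u ∈ s.filter (fun u => rk u + 1 ≤ rkO a), x u := by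
    intro a
    rw [Tc, ← Finset.sum_filter_ne_zero]
    congr 1
    ext u
    simp only [hsdef, Finset.mem_filter, Finset.mem_univ, true_and]
    tauto
  obtain ⟨utop, hutop_mem, hutop⟩ := Finset.exists_max_image s rk hsne
  -- L2
  have L2 : ∀ a : Option V, Int.fract (gg N a x) ≠ 0 →
      ∃ u ∈ s.erase utop, Tc a x = Tc (some u) x := by
    intro a hfr
    set A := s.filter (fun u => rk u + 1 ≤ rkO a) with hA
    rcases A.eq_empty_or_nonempty with hAe | hAne
    · exfalso
      apply hfr
      rw [gg, L1 a, ← hA, hAe]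
      simp
    obtain ⟨u, huA, hu⟩ := Finset.exists_max_image A rk hAne
    have huA' := huA
    rw [hA] at huA'
    have huS : u ∈ s := (Finset.mem_filter.1 huA').1
    have hua : rk u + 1 ≤ rkO a := (Finset.mem_filter.1 huA').2
    have hTu : Tc a x = Tc (some u) x := by
      rw [L1 a, L1 (some u), ← hA]
      congr 1
      ext w'
      simp only [hA, Finset.mem_filter]
      constructor
      · rintro ⟨hw1, hw2⟩
        refine ⟨hw1, ?_⟩
        show rk w' + 1 ≤ rk u + 1
        exact Nat.succ_le_succ (hu w' (Finset.mem_filter.2 ⟨hw1, hw2⟩))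
      · rintro ⟨hw1, hw2⟩
        have : rk w' + 1 ≤ rk u + 1 := hw2
        exact ⟨hw1, le_trans this hua⟩
    have hune : u ≠ utop := by
      intro hcontra
      have hAs : A = s := by
        apply subset_antisymm
        · rw [hA]; exact Finset.filter_subset _ _
        · intro w' hw'
          rw [hA]
          refine Finset.mem_filter.2 ⟨hw', ?_⟩
          have h1 : rk w' ≤ rk u := by rw [hcontra]; exact hutop w' hw'
          omega
      have h1 : Tc a x = 1 := by
        rw [L1 a, ← hA, hAs, hsum_s]
      apply hfr
      rw [gg, h1, mul_one]
      exact Int.fract_natCast N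
    exact ⟨u, Finset.mem_erase.2 ⟨hune, huS⟩, hTu⟩
  -- P
  set P : Finset ℝ :=
    (Finset.univ.image (fun a : Option V => Int.fract (gg N a x))).filter (fun t => t ≠ 0)
    with hP
  have L3 : P.card ≤ n := by
    have hinj : P.card ≤ (s.erase utop).card := by
      apply Finset.card_le_card_of_injOn
        (fun t => if h : ∃ u ∈ s.erase utop, Int.fract (gg N (some u) x) = t
          then h.choose else utop)
      · intro t ht
        obtain ⟨ht1, ht2⟩ := Finset.mem_filter.1 ht
        obtain ⟨a, -, ha⟩ := Finset.mem_image.1 ht1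
        obtain ⟨u, hu1, hu2⟩ := L2 a (by rw [ha]; exact ht2)
        have hgg : gg N (some u) x = gg N a x := by rw [gg, gg, ← hu2]
        have hex : ∃ u ∈ s.erase utop, Int.fract (gg N (some u) x) = t :=
          ⟨u, hu1, by rw [hgg, ha]⟩
        simp only [dif_pos hex]
        exact hex.choose_spec.1
      · intro t ht t' ht' heq
        obtain ⟨ht1, ht2⟩ := Finset.mem_filter.1 ht
        obtain ⟨a, -, ha⟩ := Finset.mem_image.1 ht1
        obtain ⟨u, hu1, hu2⟩ := L2 a (by rw [ha]; exact ht2)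
        have hex : ∃ u ∈ s.erase utop, Int.fract (gg N (some u) x) = t :=
          ⟨u, hu1, by rw [gg, ← hu2, ← gg, ha]⟩
        obtain ⟨ht1', ht2'⟩ := Finset.mem_filter.1 ht'
        obtain ⟨a', -, ha'⟩ := Finset.mem_image.1 ht1'
        obtain ⟨u', hu1', hu2'⟩ := L2 a' (by rw [ha']; exact ht2')
        have hex' : ∃ u ∈ s.erase utop, Int.fract (gg N (some u) x) = t' :=
          ⟨u', hu1', by rw [gg, ← hu2', ← gg, ha']⟩
        simp only [dif_pos hex, dif_pos hex'] at heq
        have h1 := hex.choose_spec.2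
        have h2 := hex'.choose_spec.2
        rw [← h1, ← h2, heq]
      
    have hce : (s.erase utop).card = s.card - 1 := Finset.card_erase_of_mem hutop_mem
    have hs1 : 1 ≤ s.card := Finset.card_pos.2 hsne
    omega
  -- interval facts
  have L4 : ∀ w : Option V → Fin (N+1), inU N w x → ∀ a : Option V,
      (((w a : ℕ) : ℤ) = ⌊gg N a x⌋ ∨ ((w a : ℕ) : ℤ) = ⌊gg N a x⌋ + 1) ∧
      (Int.fract (gg N a x) = 0 → ((w a : ℕ) : ℤ) = ⌊gg N a x⌋) := by
    intro w hw a
    have c1 := hw.2 a none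
    have c2 := hw.2 none a
    have hnone : gg N (none : Option V) x = 0 := gg_none N x
    have hw0 : (((w none : ℕ)) : ℝ) = 0 := by rw [hw.1]; simp
    have hlo : gg N a x - 1 < ((w a : ℕ) : ℝ) := by rw [hnone, hw0] at c1; linarith
    have hhi : ((w a : ℕ) : ℝ) < gg N a x + 1 := by rw [hnone, hw0] at c2; linarith
    have hfl : (⌊gg N a x⌋ : ℝ) ≤ gg N a x := Int.floor_le _
    have hfl2 : gg N a x < (⌊gg N a x⌋ : ℝ) + 1 := Int.lt_floor_add_one _
    have hZlo : ⌊gg N a x⌋ ≤ ((w a : ℕ) : ℤ) := by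
      have : (⌊gg N a x⌋ : ℝ) < ((w a : ℕ) : ℝ) + 1 := by linarith
      have h2 : ⌊gg N a x⌋ < ((w a : ℕ) : ℤ) + 1 := by exact_mod_cast this
      omega
    have hZhi : ((w a : ℕ) : ℤ) ≤ ⌊gg N a x⌋ + 1 := by
      have : ((w a : ℕ) : ℝ) < (⌊gg N a x⌋ : ℝ) + 2 := by linarith
      have h2 : ((w a : ℕ) : ℤ) < ⌊gg N a x⌋ + 2 := by exact_mod_cast this
      omega
    constructor
    · omega
    · intro hfr
      have hfloor : (⌊gg N a x⌋ : ℝ) = gg N a x := by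
        have := Int.self_sub_floor (gg N a x)
        rw [hfr] at this
        linarith
      have : ((w a : ℕ) : ℝ) < (⌊gg N a x⌋ : ℝ) + 1 := by rw [hfloor]; linarith
      have h2 : ((w a : ℕ) : ℤ) < ⌊gg N a x⌋ + 1 := by exact_mod_cast this
      omega
  have L5 : ∀ w : Option V → Fin (N+1), inU N w x → ∀ a b : Option V,
      ((w a : ℕ) : ℤ) = ⌊gg N a x⌋ + 1 → ((w b : ℕ) : ℤ) = ⌊gg N b x⌋ →
      Int.fract (gg N b x) < Int.fract (gg N a x) := by
    intro w hw a b hwa hwb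
    have c := hw.2 b a
    have ea : ((w a : ℕ) : ℝ) = (⌊gg N a x⌋ : ℝ) + 1 := by exact_mod_cast hwa
    have eb : ((w b : ℕ) : ℝ) = (⌊gg N b x⌋ : ℝ) := by exact_mod_cast hwb
    have fa := Int.self_sub_floor (gg N a x)
    have fb := Int.self_sub_floor (gg N b x)
    rw [ea, eb] at c
    linarith
  -- main counting
  set B : (Option V → Fin (N+1)) → Finset (Option V) :=
    fun w => Finset.univ.filter (fun a => ((w a : ℕ) : ℤ) ≠ ⌊gg N a x⌋) with hB
  set θ : (Option V → Fin (N+1)) → ℝ :=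
    fun w => if h : (B w).Nonempty
      then (B w).inf' h (fun a => Int.fract (gg N a x)) else 2 with hθ
  have hBmem : ∀ (u : Option V → Fin (N+1)) (a : Option V),
      a ∈ B u ↔ ((u a : ℕ) : ℤ) ≠ ⌊gg N a x⌋ := by
    intro u a
    simp [hB]
  have hWcard : Wf.card ≤ (insert (2:ℝ) P).card := by
    apply Finset.card_le_card_of_injOn θ
    · intro w hwmem
      have hw := hWf w hwmem
      by_cases hBw : (B w).Nonempty
      · obtain ⟨a₀, ha₀, hinf⟩ := Finset.exists_mem_eq_inf' hBw (fun a => Int.fract (gg N a x))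
        have hth : θ w = Int.fract (gg N a₀ x) := by rw [hθ]; simp only [dif_pos hBw]; exact hinf
        have ha₀ne : ((w a₀ : ℕ) : ℤ) ≠ ⌊gg N a₀ x⌋ := (hBmem w a₀).1 ha₀
        have hfrne : Int.fract (gg N a₀ x) ≠ 0 := by
          intro h0
          exact ha₀ne ((L4 w hw a₀).2 h0)
        rw [hth]
        apply Finset.mem_insert_of_mem
        rw [hP]
        exact Finset.mem_filter.2 ⟨Finset.mem_image.2 ⟨a₀, Finset.mem_univ _, rfl⟩, hfrne⟩
      · rw [hθ]
        simp only [dif_neg hBw]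
        exact Finset.mem_insert_self _ _
    · intro w hwmem w' hw'mem heq
      have hw := hWf w hwmem
      have hw' := hWf w' hw'mem
      have key : ∀ u u', inU N u x → inU N u' x → θ u = θ u' → B u ⊆ B u' := by
        intro u u' hu hu' hθeq a ha
        have hane : ((u a : ℕ) : ℤ) ≠ ⌊gg N a x⌋ := (hBmem u a).1 ha
        have hua : ((u a : ℕ) : ℤ) = ⌊gg N a x⌋ + 1 := ((L4 u hu a).1).resolve_left hane
        by_contra ha'
        have hu'a : ((u' a : ℕ) : ℤ) = ⌊gg N a x⌋ := by
          by_contra hne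
          exact ha' ((hBmem u' a).2 hne)
        have hBune : (B u).Nonempty := ⟨a, ha⟩
        have hθu : θ u ≤ Int.fract (gg N a x) := by
          rw [hθ]; simp only [dif_pos hBune]
          exact Finset.inf'_le _ ha
        by_cases hBu' : (B u').Nonempty
        · obtain ⟨a₀, ha₀, hinf⟩ :=
            Finset.exists_mem_eq_inf' hBu' (fun a => Int.fract (gg N a x))
          have ha₀ne : ((u' a₀ : ℕ) : ℤ) ≠ ⌊gg N a₀ x⌋ := (hBmem u' a₀).1 ha₀
          have ha₀w : ((u' a₀ : ℕ) : ℤ) = ⌊gg N a₀ x⌋ + 1 := ((L4 u' hu' a₀).1).resolve_left ha₀ne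
          have hlt : Int.fract (gg N a x) < Int.fract (gg N a₀ x) := L5 u' hu' a₀ a ha₀w hu'a
          have hth' : θ u' = Int.fract (gg N a₀ x) := by
            rw [hθ]; simp only [dif_pos hBu']; exact hinf
          rw [hθeq, hth'] at hθu
          linarith
        · have hth' : θ u' = 2 := by rw [hθ]; simp only [dif_neg hBu']
          rw [hθeq, hth'] at hθu
          have := Int.fract_lt_one (gg N a x)
          linarith
      have hBeq : B w = B w' := subset_antisymm (key w w' hw hw' heq) (key w' w hw' hw heq.symm)
      funext a
      apply Fin.ext
      have hZ : ((w a : ℕ) : ℤ) = ((w' a : ℕ) : ℤ) := by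
        by_cases haB : a ∈ B w
        · have h1 : ((w a : ℕ) : ℤ) = ⌊gg N a x⌋ + 1 :=
            ((L4 w hw a).1).resolve_left ((hBmem w a).1 haB)
          have haB' : a ∈ B w' := hBeq ▸ haB
          have h2 : ((w' a : ℕ) : ℤ) = ⌊gg N a x⌋ + 1 :=
            ((L4 w' hw' a).1).resolve_left ((hBmem w' a).1 haB')
          rw [h1, h2]
        · have h1 : ((w a : ℕ) : ℤ) = ⌊gg N a x⌋ := by
            by_contra hne
            exact haB ((hBmem w a).2 hne)
          have haB' : a ∉ B w' := fun hmem => haB (hBeq ▸ hmem)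
          have h2 : ((w' a : ℕ) : ℤ) = ⌊gg N a x⌋ := by
            by_contra hne
            exact haB' ((hBmem w' a).2 hne)
          rw [h1, h2]
      exact_mod_cast hZ
  have hic : (insert (2:ℝ) P).card ≤ P.card + 1 := Finset.card_insert_le _ _
  omega

end GromovAux
noncomputable section
set_option linter.unusedSectionVars false
namespace GromovAux

open Finset

variable {V : Type} [Fintype V] [DecidableEq V]

/-- the defining quantity for `inU` as a sup -/
def MM (K : FinSimpComplex V) (N : ℕ) (w : Option V → Fin (N+1)) (x : ↥K.space) : ℝ :=
  (Finset.univ : Finset (Option V × Option V)).sup'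
    (Finset.univ_nonempty)
    (fun ab => (gg N ab.1 x.1 - ((w ab.1 : ℕ) : ℝ)) - (gg N ab.2 x.1 - ((w ab.2 : ℕ) : ℝ)))

def psiK (K : FinSimpComplex V) (N : ℕ) (w : Option V → Fin (N+1)) (x : ↥K.space) : ℝ :=
  if w none = 0 then max (1 - MM K N w x) 0 else 0

lemma continuous_Tc (a : Option V) : Continuous fun x : V → ℝ => Tc a x :=
  continuous_finset_sum _ (fun u _ => continuous_apply u)

lemma continuous_psiK (K : FinSimpComplex V) (N : ℕ) (w : Option V → Fin (N+1)) :
    Continuous (psiK K N w) := by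
  unfold psiK
  split
  · apply Continuous.max _ continuous_const
    apply Continuous.sub continuous_const
    apply Continuous.finset_sup'_apply (Finset.univ_nonempty)
    intro ab _
    have h1 : Continuous fun x : ↥K.space => gg N ab.1 x.1 :=
      (continuous_const.mul ((continuous_Tc ab.1).comp continuous_subtype_val))
    have h2 : Continuous fun x : ↥K.space => gg N ab.2 x.1 :=
      (continuous_const.mul ((continuous_Tc ab.2).comp continuous_subtype_val))
    exact (h1.sub continuous_const).sub (h2.sub continuous_const)
  · exact continuous_const

lemma psiK_pos_iff (K : FinSimpComplex V) (N : ℕ) (w : Option V → Fin (N+1))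
    (x : ↥K.space) : 0 < psiK K N w x ↔ inU N w x.1 := by
  unfold psiK
  split
  next h =>
    constructor
    · intro hp
      refine ⟨h, fun a b => ?_⟩
      have h1 : 0 < 1 - MM K N w x := by
        rcases lt_max_iff.1 hp with h' | h'
        · exact h'
        · exact absurd h' (lt_irrefl 0)
      have h2 : MM K N w x < 1 := by linarith
      have := (Finset.sup'_lt_iff (Finset.univ_nonempty)).1 h2 (a, b) (Finset.mem_univ _)
      exact this
    · rintro ⟨-, hab⟩
      have h2 : MM K N w x < 1 := by
        apply (Finset.sup'_lt_iff (Finset.univ_nonempty)).2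
        intro ab _
        exact hab ab.1 ab.2
      exact lt_max_of_lt_left (by linarith)
  next h =>
    constructor
    · intro hp; exact absurd hp (lt_irrefl 0)
    · rintro ⟨h0, -⟩; exact absurd h0 h

lemma space_isClosed (K : FinSimpComplex V) : IsClosed K.space := by
  have hrw : K.space = ({x : V → ℝ | ∀ v, 0 ≤ x v} ∩ {x : V → ℝ | ∑ v, x v = 1}) ∩
      (⋃ s ∈ K.faces, {x : V → ℝ | ∀ v, v ∉ s → x v = 0}) := by
    ext x
    simp only [FinSimpComplex.space, Set.mem_inter_iff, Set.mem_setOf_eq, Set.mem_iUnion]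
    constructor
    · rintro ⟨h1, h2, s, hs, h3⟩
      exact ⟨⟨h1, h2⟩, s, hs, fun v hv => by
        by_contra hne
        exact hv (h3 v hne)⟩
    · rintro ⟨⟨h1, h2⟩, s, hs, h3⟩
      exact ⟨h1, h2, s, hs, fun v hv => by
        by_contra hne
        exact hv (h3 v hne)⟩
  rw [hrw]
  apply IsClosed.inter
  · apply IsClosed.inter
    · have : {x : V → ℝ | ∀ v, 0 ≤ x v} = ⋂ v, {x : V → ℝ | 0 ≤ x v} := by
        ext x; simp
      rw [this]
      exact isClosed_iInter fun v => isClosed_le continuous_const (continuous_apply v)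
    · exact isClosed_eq (continuous_finset_sum _ fun v _ => continuous_apply v)
        continuous_const
  · apply Set.Finite.isClosed_biUnion (K.faces.finite_toSet)
    intro s _
    have : {x : V → ℝ | ∀ v, v ∉ s → x v = 0} = ⋂ v, {x : V → ℝ | v ∉ s → x v = 0} := by
      ext x; simp
    rw [this]
    apply isClosed_iInter
    intro v
    by_cases hv : v ∈ s
    · have : {x : V → ℝ | v ∉ s → x v = 0} = Set.univ := by
        ext x; simp [hv]
      rw [this]; exact isClosed_univ
    · have : {x : V → ℝ | v ∉ s → x v = 0} = {x : V → ℝ | x v = 0} := by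
        ext x; simp [hv]
      rw [this]
      exact isClosed_eq (continuous_apply v) continuous_const
 
lemma space_isCompact (K : FinSimpComplex V) : IsCompact K.space := by
  apply Metric.isCompact_of_isClosed_isBounded (space_isClosed K)
  apply (Metric.isBounded_closedBall (x := (0 : V → ℝ)) (r := 1)).subset
  intro x hx
  obtain ⟨h1, h2, -⟩ := hx
  rw [Metric.mem_closedBall]
  rw [show (0 : V → ℝ) = fun _ => (0:ℝ) from rfl]
  apply dist_pi_le_iff (by norm_num : (0:ℝ) ≤ 1) |>.2
  intro v
  rw [Real.dist_eq]
  have hle : x v ≤ 1 := by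
    rw [← h2]
    exact Finset.single_le_sum (f := x) (fun u _ => h1 u) (Finset.mem_univ v)
  rw [abs_of_nonneg (by simpa using h1 v)]
  simpa using hle

lemma supp_card_le (K : FinSimpComplex V) (x : ↥K.space) :
    (Finset.univ.filter (fun v => x.1 v ≠ 0)).card ≤ K.dim + 1 := by
  obtain ⟨-, -, s, hs, hsupp⟩ := x.2
  have hsub : Finset.univ.filter (fun v => x.1 v ≠ 0) ⊆ s := by
    intro v hv
    exact hsupp v (Finset.mem_filter.1 hv).2
  have h1 : (Finset.univ.filter (fun v => x.1 v ≠ 0)).card ≤ s.card :=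
    Finset.card_le_card hsub
  have h2 : s.card - 1 ≤ K.dim := Finset.le_sup (f := fun s => s.card - 1) hs
  have h3 : 1 ≤ s.card := Finset.card_pos.2 (K.nonempty_of_mem s hs)
  omega

end GromovAux
noncomputable section
namespace GromovAux2

open Finset

def pointComplex : FinSimpComplex (Fin 1) where
  faces := {{0}}
  nonempty_of_mem s hs := by
    simp only [Finset.mem_singleton] at hs; subst hs; exact ⟨0, by simp⟩
  down_closed s hs t hts htne := by
    simp only [Finset.mem_singleton] at hs ⊢
    subst hs
    rcases Finset.subset_singleton_iff.1 hts with rfl | h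
    · exact absurd htne (by simp)
    · exact h

lemma widim_eq_zero_of_isEmpty {Y : Type*} [TopologicalSpace Y] [IsEmpty Y]
    (d' : Y → Y → ℝ) {ε : ℝ} (hε : 0 < ε) : widim Y d' ε = 0 := by
  refine le_antisymm ?_ zero_le
  refine sInf_le ⟨0, by simp, 1, pointComplex, fun a => isEmptyElim a, ?_, ?_, ?_⟩
  · intro s hs
    have : s = {0} := by simpa [pointComplex] using hs
    simp [this]
  · rw [continuous_def]
    intro s _
    have : ((fun a : Y => (isEmptyElim a : ↥pointComplex.space)) ⁻¹' s) = ∅ :=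
      Set.eq_empty_of_isEmpty _
    rw [this]
    exact isOpen_empty
  · intro p
    have h0 : diamOn d' ((fun a : Y => (isEmptyElim a : ↥pointComplex.space)) ⁻¹' {p}) = 0 := by
      simp [diamOn]
    rw [h0]
    exact ENNReal.ofReal_pos.2 hε

lemma natdiv_le (n m : ℕ) (hm : 0 < m) : ((n / m : ℕ) : ℝ≥0∞) ≤ (n : ℝ≥0∞) / (m : ℝ≥0∞) := by
  rw [ENNReal.le_div_iff_mul_le (Or.inl (by exact_mod_cast hm.ne'))
    (Or.inl (ENNReal.natCast_ne_top m))]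
  rw [← Nat.cast_mul]
  exact_mod_cast Nat.div_mul_le_self n m

lemma main_abstract {X : Type} [TopologicalSpace X] {ι : Type} [Fintype ι] [DecidableEq ι]
    [Nonempty ι]
    (d : X → X → ℝ) (ε : ℝ) (hε : 0 < ε) (n m : ℕ) (hm : 0 < m)
    (ψ : ι → X → ℝ) (hψc : ∀ i, Continuous (ψ i))
    (hord : ∀ x : X, ∀ A : Finset ι, (∀ i ∈ A, 0 < ψ i x) → A.card ≤ n + 1)
    (hcov : ∀ x : X, ∃ i, 0 < ψ i x)
    (hclose : ∀ (i : ι) (x y : X), 0 < ψ i x → 0 < ψ i y → d x y ≤ ε / 2) :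
    ∃ F : X → (Fin (m - 1) → ↥(Set.Icc (0 : ℝ) 1)),
      Continuous F ∧
      ∀ p : Fin (m - 1) → ↥(Set.Icc (0 : ℝ) 1),
        widim ↥(F ⁻¹' {p}) (fun a b => d a.1 b.1) ε ≤ (n : ℝ≥0∞) / (m : ℝ≥0∞) := by
  classical
  set Scal : Finset (Finset ι) :=
    Finset.univ.filter (fun S => S.Nonempty ∧ S.card ≤ n + 1) with hScal
  set Φ : X → ℝ := fun x => ∑ S ∈ Scal, phi ψ S x with hΦ
  have hΦpos : ∀ x, 0 < Φ x := by
    intro x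
    obtain ⟨S, hS1, hS2, hS3⟩ := phi_cover (hord x) (hcov x)
    exact Finset.sum_pos' (fun T _ => phi_nonneg ψ T x)
      ⟨S, by simp [hScal, hS1, hS2], hS3⟩
  have hΦc : Continuous Φ := continuous_finset_sum _ (fun S _ => continuous_phi hψc S)
  set φn : Finset ι → X → ℝ := fun S x => phi ψ S x / Φ x with hφn
  have hφnc : ∀ S, Continuous (φn S) :=
    fun S => (continuous_phi hψc S).div hΦc (fun x => (hΦpos x).ne')
  have hφnn : ∀ S x, 0 ≤ φn S x := fun S x => div_nonneg (phi_nonneg ψ S x) (hΦpos x).le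
  have hφnsum : ∀ x, ∑ S ∈ Scal, φn S x = 1 := by
    intro x
    rw [hφn, ← Finset.sum_div]
    exact div_self (hΦpos x).ne'
  have hφn_pos_iff : ∀ S x, 0 < φn S x ↔ 0 < phi ψ S x := by
    intro S x
    constructor
    · intro h
      by_contra h'
      have h0 : phi ψ S x = 0 := le_antisymm (not_lt.1 h') (phi_nonneg ψ S x)
      rw [hφn] at h
      simp only [h0, zero_div] at h
      exact lt_irrefl _ h
    · intro h
      exact div_pos h (hΦpos x)
  set grp : Finset ι → Fin m := fun S => ⟨(S.card - 1) % m, Nat.mod_lt _ hm⟩ with hgrp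
  set G : Fin m → X → ℝ := fun j x => ∑ S ∈ Scal.filter (fun S => grp S = j), φn S x with hG
  have hGc : ∀ j, Continuous (G j) := fun j => continuous_finset_sum _ (fun S _ => hφnc S)
  have hGnn : ∀ j x, 0 ≤ G j x := fun j x => Finset.sum_nonneg fun S _ => hφnn S x
  have hGsum : ∀ x, ∑ j : Fin m, G j x = 1 := by
    intro x
    rw [hG]
    rw [Finset.sum_fiberwise_of_maps_to (fun S _ => Finset.mem_univ (grp S))]
    exact hφnsum x
  have hGle1 : ∀ j x, G j x ≤ 1 := by
    intro j x
    calc G j x ≤ ∑ S ∈ Scal, φn S x :=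
          Finset.sum_le_sum_of_subset_of_nonneg (Finset.filter_subset _ _)
            (fun S _ _ => hφnn S x)
      _ = 1 := hφnsum x
  have hmm1 : ∀ j : Fin (m-1), (j : ℕ) + 1 < m := fun j => by have := j.isLt; omega
  set F : X → Fin (m-1) → ↥(Set.Icc (0:ℝ) 1) :=
    fun x j => ⟨G ⟨(j : ℕ)+1, hmm1 j⟩ x, ⟨hGnn _ x, hGle1 _ x⟩⟩ with hF
  refine ⟨F, continuous_pi fun j => Continuous.subtype_mk (hGc _) _, ?_⟩
  intro p
  rcases isEmpty_or_nonempty ↥(F ⁻¹' {p}) with hE | hNE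
  · haveI := hE
    rw [widim_eq_zero_of_isEmpty _ hε]
    exact zero_le
  obtain ⟨x₀⟩ := hNE
  have hfib : ∀ a : ↥(F ⁻¹' {p}), ∀ j : Fin (m-1),
      G ⟨(j : ℕ)+1, hmm1 j⟩ a.1 = (p j : ℝ) := by
    intro a j
    have ha : F a.1 = p := a.2
    exact congrArg Subtype.val (congrFun ha j)
  have hne0 : ∀ (j : Fin m) (hj : j.val ≠ 0), ∀ a : ↥(F ⁻¹' {p}),
      G j a.1 = (p ⟨j.val - 1, by have := j.isLt; omega⟩ : ℝ) := by
    intro j hj a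
    have hj' : (⟨((⟨j.val - 1, by have := j.isLt; omega⟩ : Fin (m-1)) : ℕ) + 1,
        hmm1 _⟩ : Fin m) = j := by
      apply Fin.ext
      show (j.val - 1) + 1 = j.val
      omega
    conv_lhs => rw [← hj']
    exact hfib a _
  have hGconst : ∀ (j : Fin m) (a : ↥(F ⁻¹' {p})), G j a.1 = G j x₀.1 := by
    intro j a
    by_cases hj : j.val = 0
    · have key : ∀ b : ↥(F ⁻¹' {p}), G j b.1 = 1 - ∑ j' ∈ Finset.univ.erase j, G j' b.1 := by
        intro b
        have hsb := hGsum b.1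
        rw [← Finset.add_sum_erase Finset.univ (fun j' => G j' b.1) (Finset.mem_univ j)] at hsb
        linarith
      rw [key a, key x₀]
      have : ∀ j' ∈ Finset.univ.erase j, G j' a.1 = G j' x₀.1 := by
        intro j' hj'
        have hj'0 : j'.val ≠ 0 := by
          intro h0
          exact (Finset.mem_erase.1 hj').1 (Fin.ext (by rw [h0, hj]))
        rw [hne0 j' hj'0 a, hne0 j' hj'0 x₀]
      rw [Finset.sum_congr rfl this]
    · rw [hne0 j hj a, hne0 j hj x₀]
  obtain ⟨js, hjs⟩ : ∃ j : Fin m, 0 < G j x₀.1 := by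
    by_contra h
    push_neg at h
    have h1 : (1:ℝ) ≤ 0 := by
      rw [← hGsum x₀.1]
      exact Finset.sum_nonpos (fun j _ => h j)
    linarith
  set c : ℝ := G js x₀.1 with hc
  have hc_pos : 0 < c := hjs
  have hcfib : ∀ a : ↥(F ⁻¹' {p}), G js a.1 = c := fun a => hGconst js a
  set VS : Finset (Finset ι) := Scal.filter (fun S => grp S = js) with hVS
  set k : ℕ := VS.card with hk
  set evs : ↥VS ≃ Fin k := (Fintype.equivFin ↥VS).trans (finCongr (Fintype.card_coe VS))
    with hevs
  set vS : Fin k → Finset ι := fun i => ((evs.symm i : ↥VS) : Finset ι) with hvS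
  have hvSmem : ∀ i, vS i ∈ VS := fun i => (evs.symm i).2
  have hvSinj : Function.Injective vS := by
    intro i i' h
    exact evs.symm.injective (Subtype.ext h)
  have hVSprop : ∀ i, (vS i).Nonempty ∧ (vS i).card ≤ n + 1 ∧
      ((vS i).card - 1) % m = js.val := by
    intro i
    have h1 := hvSmem i
    rw [hVS, Finset.mem_filter] at h1
    have h2 := h1.1
    rw [hScal, Finset.mem_filter] at h2
    refine ⟨h2.2.1, h2.2.2, ?_⟩
    have h3 := congrArg Fin.val h1.2
    simpa [hgrp] using h3
  set K' : FinSimpComplex (Fin k) :=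
    { faces := Finset.univ.filter
        (fun A : Finset (Fin k) => A.Nonempty ∧ ∃ x : X, ∀ i ∈ A, 0 < phi ψ (vS i) x),
      nonempty_of_mem := fun s hs => ((Finset.mem_filter.1 hs).2).1,
      down_closed := fun s hs t hts htne => by
        obtain ⟨-, -, x, hx⟩ := Finset.mem_filter.1 hs
        exact Finset.mem_filter.2
          ⟨Finset.mem_univ _, htne, x, fun i hi => hx i (hts hi)⟩ } with hK'
  have hdimLE : K'.dimLE (n / m) := by
    intro A hA
    have hA' := Finset.mem_filter.1 hA
    obtain ⟨-, hne, x, hx⟩ := hA'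
    have hcard : A.card ≤ (Finset.range (n / m + 1)).card := by
      apply Finset.card_le_card_of_injOn (fun i => ((vS i).card - 1) / m)
      · intro i hi
        simp only [Finset.coe_range, Set.mem_Iio]
        have h1 : (vS i).card ≤ n + 1 := (hVSprop i).2.1
        have h2 : ((vS i).card - 1) / m ≤ n / m :=
          Nat.div_le_div_right (by omega)
        omega
      · intro i hi i' hi' heq
        by_contra hii
        have hSne : vS i ≠ vS i' := fun h => hii (hvSinj h)
        have hcards : (vS i).card ≠ (vS i').card := fun h =>
          hSne (phi_proper (hx i hi) (hx i' hi') h)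
        have heq' : ((vS i).card - 1) / m = ((vS i').card - 1) / m := heq
        have e1 := Nat.div_add_mod ((vS i).card - 1) m
        have e2 := Nat.div_add_mod ((vS i').card - 1) m
        have hmod1 := (hVSprop i).2.2
        have hmod2 := (hVSprop i').2.2
        have hne1 : 1 ≤ (vS i).card := Finset.card_pos.2 (hVSprop i).1
        have hne2 : 1 ≤ (vS i').card := Finset.card_pos.2 (hVSprop i').1
        have : (vS i).card - 1 = (vS i').card - 1 := by
          rw [← e1, ← e2, heq', hmod1, hmod2]
        exact hcards (by omega)
    simpa using hcard
  have hsumk : ∀ x : X, ∑ i : Fin k, φn (vS i) x = G js x := by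
    intro x
    calc ∑ i : Fin k, φn (vS i) x = ∑ s : ↥VS, φn (s : Finset ι) x :=
          Equiv.sum_comp evs.symm (fun s : ↥VS => φn (s : Finset ι) x)
      _ = ∑ S ∈ VS, φn S x := Finset.sum_coe_sort VS (fun S => φn S x)
      _ = G js x := rfl
  have hsproof : ∀ a : ↥(F ⁻¹' {p}), ∑ i : Fin k, (φn (vS i) a.1 / c) = 1 := by
    intro a
    rw [← Finset.sum_div, hsumk, hcfib a]
    exact div_self hc_pos.ne'
  have hmem : ∀ a : ↥(F ⁻¹' {p}), (fun i => φn (vS i) a.1 / c) ∈ K'.space := by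
    intro a
    refine ⟨fun i => div_nonneg (hφnn _ _) hc_pos.le, hsproof a, ?_⟩
    refine ⟨Finset.univ.filter (fun i => φn (vS i) a.1 / c ≠ 0), ?_, ?_⟩
    · refine Finset.mem_filter.2 ⟨Finset.mem_univ _, ?_, a.1, ?_⟩
      · by_contra hemp
        rw [Finset.not_nonempty_iff_eq_empty] at hemp
        have hz : ∑ i : Fin k, (φn (vS i) a.1 / c) = 0 := by
          apply Finset.sum_eq_zero
          intro i _
          by_contra hne
          have hmem2 : i ∈ Finset.univ.filter (fun i => φn (vS i) a.1 / c ≠ 0) :=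
            Finset.mem_filter.2 ⟨Finset.mem_univ _, hne⟩
          rw [hemp] at hmem2
          exact absurd hmem2 (Finset.notMem_empty i)
        rw [hsproof a] at hz
        linarith
      · intro i hi
        have hne := (Finset.mem_filter.1 hi).2
        have hφne : φn (vS i) a.1 ≠ 0 := fun h => hne (by rw [h, zero_div])
        have hpos : 0 < φn (vS i) a.1 := lt_of_le_of_ne (hφnn _ _) (Ne.symm hφne)
        exact (hφn_pos_iff _ _).1 hpos
    · intro i hi
      exact Finset.mem_filter.2 ⟨Finset.mem_univ _, hi⟩
  set f : ↥(F ⁻¹' {p}) → ↥K'.space := fun a => ⟨fun i => φn (vS i) a.1 / c, hmem a⟩ with hf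
  refine le_trans (sInf_le ?_) (natdiv_le n m hm)
  refine ⟨n / m, rfl, k, K', f, hdimLE, ?_, ?_⟩
  · apply Continuous.subtype_mk
    exact continuous_pi fun i => ((hφnc (vS i)).comp continuous_subtype_val).div_const c
  · intro q
    have hpair : ∀ a b : ↥(F ⁻¹' {p}), f a = f b → d a.1 b.1 ≤ ε / 2 := by
      intro a b hab
      have hcoords : ∀ i, φn (vS i) a.1 = φn (vS i) b.1 := by
        intro i
        have h1 := congrFun (congrArg Subtype.val hab) i
        have h2 : φn (vS i) a.1 / c = φn (vS i) b.1 / c := h1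
        have h3 := congrArg (fun t => t * c) h2
        simpa [div_mul_cancel₀, hc_pos.ne'] using h3
      obtain ⟨i, hi⟩ : ∃ i : Fin k, 0 < φn (vS i) a.1 := by
        by_contra h
        push_neg at h
        have h0 : ∑ i : Fin k, φn (vS i) a.1 = c := by rw [hsumk, hcfib a]
        have h1 : ∑ i : Fin k, φn (vS i) a.1 ≤ 0 := Finset.sum_nonpos (fun i _ => h i)
        linarith
      have hpa : 0 < phi ψ (vS i) a.1 := (hφn_pos_iff _ _).1 hi
      have hpb : 0 < phi ψ (vS i) b.1 := (hφn_pos_iff _ _).1 (hcoords i ▸ hi)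
      obtain ⟨i₀, hi₀⟩ := (hVSprop i).1
      exact hclose i₀ a.1 b.1 (psi_pos_of_phi hpa hi₀) (psi_pos_of_phi hpb hi₀)
    have hd : diamOn (fun a b : ↥(F ⁻¹' {p}) => d a.1 b.1) (f ⁻¹' {q})
        ≤ ENNReal.ofReal (ε/2) := by
      refine iSup₂_le fun a ha => iSup₂_le fun b hb => ?_
      apply ENNReal.ofReal_le_ofReal
      have hfa : f a = q := ha
      have hfb : f b = q := hb
      exact hpair a b (hfa.trans hfb.symm)
    exact lt_of_le_of_lt hd ((ENNReal.ofReal_lt_ofReal_iff hε).2 (by linarith))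

end GromovAux2

/-- **Corollary 3.4.** Let `K` be a finite simplicial complex with a metric `d`. For any
`ε > 0` and any natural number `m ≥ 1` there exists a continuous map `F : K → [0,1]^{m-1}`
such that `widim_ε(F⁻¹(p), d) ≤ (dim K)/m` for every `p ∈ [0,1]^{m-1}`. -/
theorem gromov_corollary_cube {V : Type} [Fintype V] [DecidableEq V]
    (K : FinSimpComplex V) (d : ↥K.space → ↥K.space → ℝ)
    (hd : IsCompatibleMetric d) (ε : ℝ) (hε : 0 < ε) {m : ℕ} (hm : 0 < m) :
    ∃ F : ↥K.space → (Fin (m - 1) → ↥(Set.Icc (0 : ℝ) 1)),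
      Continuous F ∧
      ∀ p : Fin (m - 1) → ↥(Set.Icc (0 : ℝ) 1),
        widim ↥(F ⁻¹' {p}) (fun a b => d a.1 b.1) ε ≤ (K.dim : ℝ≥0∞) / (m : ℝ≥0∞) := by
  classical
  obtain ⟨mX, htop, hdist⟩ := hd
  haveI : CompactSpace ↥K.space := isCompact_iff_compactSpace.1 (GromovAux.space_isCompact K)
  have hdc : Continuous (fun q : ↥K.space × ↥K.space => d q.1 q.2) := by
    have key := @continuous_dist ↥K.space mX.toPseudoMetricSpace
    rw [htop] at key
    have heq : (fun p : ↥K.space × ↥K.space =>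
        @dist _ mX.toPseudoMetricSpace.toDist p.1 p.2) = fun p => d p.1 p.2 :=
      funext fun p => hdist p.1 p.2
    rw [heq] at key
    exact key
  have hd0 : ∀ y : ↥K.space, d y y = 0 := fun y => by
    rw [← hdist]
    exact @dist_self _ mX.toPseudoMetricSpace y
  have hdnn : ∀ x y : ↥K.space, 0 ≤ d x y := fun x y => by
    rw [← hdist]
    exact @dist_nonneg _ mX.toPseudoMetricSpace x y
  have hUC : UniformContinuous (fun q : ↥K.space × ↥K.space => d q.1 q.2) :=
    CompactSpace.uniformContinuous_of_continuous hdc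
  obtain ⟨δ, hδpos, hδ⟩ := Metric.uniformContinuous_iff.1 hUC (ε/2) (half_pos hε)
  have hδ' : ∀ x y : ↥K.space, dist x y < δ → d x y ≤ ε / 2 := by
    intro x y hxy
    have hab : dist ((x, y) : ↥K.space × ↥K.space) ((y, y) : ↥K.space × ↥K.space) < δ := by
      rw [Prod.dist_eq]
      simp only [dist_self]
      exact max_lt hxy hδpos
    have h1 := hδ hab
    rw [Real.dist_eq] at h1
    have h0 := hd0 y
    have h2 : |d x y - d y y| < ε / 2 := h1
    rw [h0, sub_zero, abs_of_nonneg (hdnn x y)] at h2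
    linarith
  obtain ⟨N0, hN0⟩ := exists_nat_gt (2/δ)
  set N := N0 + 1 with hN
  have hNpos : 0 < N := Nat.succ_pos _
  have hNr : (0:ℝ) < N := by exact_mod_cast hNpos
  have h2N : 2 / (N:ℝ) < δ := by
    have hN' : 2/δ < (N:ℝ) := lt_of_lt_of_le hN0 (by exact_mod_cast Nat.le_succ N0)
    rw [div_lt_iff₀ hδpos] at hN'
    rw [div_lt_iff₀ hNr]
    nlinarith
  obtain ⟨F, hFc, hFw⟩ := GromovAux2.main_abstract (ι := Option V → Fin (N+1))
    d ε hε K.dim m hm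
    (GromovAux.psiK K N) (fun w => GromovAux.continuous_psiK K N w)
    (by
      intro x A hA
      exact GromovAux.U_count x.2.1 x.2.2.1 (GromovAux.supp_card_le K x) A
        (fun w hw => (GromovAux.psiK_pos_iff K N w x).1 (hA w hw)))
    (by
      intro x
      obtain ⟨w, hw⟩ := GromovAux.U_cover N x.1 x.2.1 x.2.2.1
      exact ⟨w, (GromovAux.psiK_pos_iff K N w x).2 hw⟩)
    (by
      intro w x y hx hy
      have hux := (GromovAux.psiK_pos_iff K N w x).1 hx
      have huy := (GromovAux.psiK_pos_iff K N w y).1 hy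
      have hdist2 : dist x y ≤ 2/(N:ℝ) := by
        rw [Subtype.dist_eq]
        apply (dist_pi_le_iff (by positivity)).2
        intro v
        rw [Real.dist_eq]
        exact (GromovAux.U_mesh hNpos hux huy v).le
      exact hδ' x y (lt_of_le_of_lt hdist2 h2N))
  exact ⟨F, hFc, hFw⟩
end
end
end
end
end
end

section
/- Let π_i : (X_i,T_i) → (Y_i,S_i) (i = 1,2) be factor maps between dynamical systems and consider the product factor map π₁ × π₂ : (X₁ × X₂, T₁ × T₂) → (Y₁ × Y₂, S₁ × S₂). Then mdim(π₁ × π₂, T₁ × T₂) ≤ mdim(π₁,T₁) + mdim(π₂,T₂). -/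
set_option maxHeartbeats 1000000

open scoped ENNReal

/-! ### Auxiliary development -/

section Aux

open scoped BigOperators

/-! #### Discrete cdf and monotone coupling -/

noncomputable def nExt {k : ℕ} (x : Fin k → ℝ) (i : ℕ) : ℝ :=
  if h : i < k then x ⟨i, h⟩ else 0

noncomputable def cdf {k : ℕ} (x : Fin k → ℝ) (m : ℕ) : ℝ :=
  ∑ i ∈ Finset.range m, nExt x i

lemma nExt_nonneg {k : ℕ} {x : Fin k → ℝ} (hx : ∀ v, 0 ≤ x v) (i : ℕ) : 0 ≤ nExt x i := by
  unfold nExt; split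
  · exact hx _
  · exact le_refl 0

lemma nExt_val {k : ℕ} (x : Fin k → ℝ) (v : Fin k) : nExt x v.1 = x v := by
  simp [nExt, v.2]

lemma cdf_zero {k : ℕ} (x : Fin k → ℝ) : cdf x 0 = 0 := by simp [cdf]

lemma cdf_succ {k : ℕ} (x : Fin k → ℝ) (m : ℕ) : cdf x (m + 1) = cdf x m + nExt x m := by
  simp [cdf, Finset.sum_range_succ]

lemma cdf_mono {k : ℕ} {x : Fin k → ℝ} (hx : ∀ v, 0 ≤ x v) {m m' : ℕ} (h : m ≤ m') :
    cdf x m ≤ cdf x m' := by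
  unfold cdf
  exact Finset.sum_le_sum_of_subset_of_nonneg (Finset.range_subset_range.2 h)
    (fun i _ _ => nExt_nonneg hx i)

lemma cdf_nonneg {k : ℕ} {x : Fin k → ℝ} (hx : ∀ v, 0 ≤ x v) (m : ℕ) : 0 ≤ cdf x m := by
  rw [← cdf_zero x]; exact cdf_mono hx (Nat.zero_le m)

lemma cdf_total {k : ℕ} (x : Fin k → ℝ) : cdf x k = ∑ v, x v := by
  unfold cdf
  rw [← Fin.sum_univ_eq_sum_range]
  exact Finset.sum_congr rfl fun v _ => nExt_val x v

lemma cdf_le_total {k : ℕ} {x : Fin k → ℝ} (hx : ∀ v, 0 ≤ x v) (m : ℕ) :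
    cdf x m ≤ ∑ v, x v := by
  rcases le_total m k with h | h
  · rw [← cdf_total]; exact cdf_mono hx h
  · rw [← cdf_total]
    have : cdf x m = cdf x k := by
      unfold cdf
      rw [← Finset.sum_subset (Finset.range_subset_range.2 h)]
      intro i _ hi
      simp only [Finset.mem_range, not_lt] at hi
      simp [nExt, Nat.not_lt.2 hi]
    rw [this]

lemma clamp_diff {a b u u' : ℝ} (hab : a ≤ b) (huu : u ≤ u') :
    max 0 (min b u' - max a u) = min b (max a u') - min b (max a u) := by
  simp only [max_def, min_def]
  split_ifs <;> linarith

noncomputable def couple {k₁ k₂ : ℕ} (x : Fin k₁ → ℝ) (y : Fin k₂ → ℝ)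
    (p : Fin k₁ × Fin k₂) : ℝ :=
  max 0 (min (cdf x (p.1 + 1)) (cdf y (p.2 + 1)) - max (cdf x p.1) (cdf y p.2))

lemma couple_nonneg {k₁ k₂ : ℕ} (x : Fin k₁ → ℝ) (y : Fin k₂ → ℝ) (p : Fin k₁ × Fin k₂) :
    0 ≤ couple x y p := le_max_left _ _

lemma couple_comm {k₁ k₂ : ℕ} (x : Fin k₁ → ℝ) (y : Fin k₂ → ℝ) (v : Fin k₁) (w : Fin k₂) :
    couple x y (v, w) = couple y x (w, v) := by
  simp [couple, min_comm, max_comm]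

lemma couple_marginal_fst {k₁ k₂ : ℕ} {x : Fin k₁ → ℝ} {y : Fin k₂ → ℝ}
    (hx : ∀ v, 0 ≤ x v) (hy : ∀ w, 0 ≤ y w) (hx1 : ∑ v, x v = 1) (hy1 : ∑ w, y w = 1)
    (v : Fin k₁) : ∑ w, couple x y (v, w) = x v := by
  set a := cdf x v.1 with ha
  set b := cdf x (v.1 + 1) with hb
  have hab : a ≤ b := cdf_mono hx (Nat.le_succ _)
  have hterm : ∀ w : Fin k₂, couple x y (v, w) =
      min b (max a (cdf y (w.1 + 1))) - min b (max a (cdf y w.1)) := by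
    intro w
    exact clamp_diff hab (cdf_mono hy (Nat.le_succ _))
  calc ∑ w, couple x y (v, w)
      = ∑ w : Fin k₂, ((fun i => min b (max a (cdf y (i + 1))) - min b (max a (cdf y i))) w.1) := by
        exact Finset.sum_congr rfl fun w _ => hterm w
    _ = ∑ i ∈ Finset.range k₂, (min b (max a (cdf y (i + 1))) - min b (max a (cdf y i))) := by
        rw [← Fin.sum_univ_eq_sum_range]
    _ = min b (max a (cdf y k₂)) - min b (max a (cdf y 0)) := by
        exact Finset.sum_range_sub (fun i => min b (max a (cdf y i))) k₂
    _ = x v := by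
        rw [cdf_zero, cdf_total, hy1]
        have ha1 : a ≤ 1 := by rw [ha, ← hx1]; exact cdf_le_total hx _
        have hb1 : b ≤ 1 := by rw [hb, ← hx1]; exact cdf_le_total hx _
        have ha0 : 0 ≤ a := cdf_nonneg hx _
        have hxv : b - a = x v := by rw [hb, cdf_succ, ha, nExt_val]; ring
        rw [max_eq_right ha1, min_eq_left hb1, max_eq_left ha0, min_eq_right hab, hxv]

lemma couple_marginal_snd {k₁ k₂ : ℕ} {x : Fin k₁ → ℝ} {y : Fin k₂ → ℝ}
    (hx : ∀ v, 0 ≤ x v) (hy : ∀ w, 0 ≤ y w) (hx1 : ∑ v, x v = 1) (hy1 : ∑ w, y w = 1)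
    (w : Fin k₂) : ∑ v, couple x y (v, w) = y w := by
  calc ∑ v, couple x y (v, w) = ∑ v, couple y x (w, v) :=
        Finset.sum_congr rfl fun v _ => couple_comm x y v w
    _ = y w := couple_marginal_fst hy hx hy1 hx1 w

lemma couple_ne_iff {k₁ k₂ : ℕ} (x : Fin k₁ → ℝ) (y : Fin k₂ → ℝ) (p : Fin k₁ × Fin k₂) :
    couple x y p ≠ 0 ↔ max (cdf x p.1) (cdf y p.2) < min (cdf x (p.1 + 1)) (cdf y (p.2 + 1)) := by
  rw [← sub_pos]
  unfold couple
  rcases le_or_gt (min (cdf x (p.1 + 1)) (cdf y (p.2 + 1)) - max (cdf x p.1) (cdf y p.2)) 0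
    with h | h
  · rw [max_eq_left h]
    exact ⟨fun hh => absurd rfl hh, fun hh => absurd hh (not_lt.2 h)⟩
  · rw [max_eq_right h.le]
    exact ⟨fun _ => h, fun _ => h.ne'⟩

lemma couple_chain {k₁ k₂ : ℕ} {x : Fin k₁ → ℝ} {y : Fin k₂ → ℝ}
    (hx : ∀ v, 0 ≤ x v) (hy : ∀ w, 0 ≤ y w) {p q : Fin k₁ × Fin k₂}
    (hp : couple x y p ≠ 0) (hq : couple x y q ≠ 0) :
    (p.1 ≤ q.1 ∧ p.2 ≤ q.2) ∨ (q.1 ≤ p.1 ∧ q.2 ≤ p.2) := by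
  rw [couple_ne_iff] at hp hq
  have key : ∀ (p q : Fin k₁ × Fin k₂),
      max (cdf x p.1) (cdf y p.2) < min (cdf x (p.1+1)) (cdf y (p.2+1)) →
      max (cdf x q.1) (cdf y q.2) < min (cdf x (q.1+1)) (cdf y (q.2+1)) →
      (p.1 : ℕ) < q.1 → (p.2 : ℕ) ≤ q.2 := by
    intro p q hp hq hlt
    by_contra hgt
    push_neg at hgt
    have h1 : cdf x (p.1 + 1) ≤ cdf x q.1 := cdf_mono hx hlt
    have h2 : cdf y (q.2 + 1) ≤ cdf y p.2 := cdf_mono hy hgt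
    have hA : cdf x q.1 < cdf y (q.2 + 1) := lt_of_le_of_lt (le_max_left _ _)
      (hq.trans_le (min_le_right _ _))
    have hB : cdf y p.2 < cdf x (p.1 + 1) := lt_of_le_of_lt (le_max_right _ _)
      (hp.trans_le (min_le_left _ _))
    linarith
  rcases lt_trichotomy (p.1 : ℕ) (q.1 : ℕ) with h | h | h
  · left; exact ⟨le_of_lt h, key p q hp hq h⟩
  · rcases le_total (p.2 : ℕ) (q.2 : ℕ) with h2 | h2
    · left; exact ⟨le_of_eq (Fin.val_injective h), h2⟩
    · right; exact ⟨le_of_eq (Fin.val_injective h.symm), h2⟩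
  · right; exact ⟨le_of_lt h, key q p hq hp h⟩

lemma continuous_cdf {k m : ℕ} : Continuous fun u : Fin k → ℝ => cdf u m := by
  unfold cdf
  apply continuous_finset_sum
  intro i _
  unfold nExt
  split
  · exact continuous_apply _
  · exact continuous_const

/-! #### Chains in products -/

lemma chain_exists_top {α β : Type*} [LinearOrder α] [LinearOrder β]
    (t : Finset (α × β)) (hne : t.Nonempty)
    (hch : ∀ p ∈ t, ∀ q ∈ t, (p.1 ≤ q.1 ∧ p.2 ≤ q.2) ∨ (q.1 ≤ p.1 ∧ q.2 ≤ p.2)) :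
    ∃ p ∈ t, ∀ q ∈ t, q.1 ≤ p.1 ∧ q.2 ≤ p.2 := by
  obtain ⟨p, hp, hpmax⟩ := t.exists_max_image (fun p => toLex p) hne
  refine ⟨p, hp, fun q hq => ?_⟩
  rcases hch q hq p hp with h | h
  · exact h
  · have hlex := hpmax q hq
    rcases Prod.lex_def.1 (hlex : toLex q ≤ toLex p) with h1 | h1
    · exact absurd (lt_of_le_of_lt h.1 h1) (lt_irrefl _)
    · exact ⟨le_of_eq h1.1, h1.2⟩

lemma chain_card_le {α β : Type*} [LinearOrder α] [LinearOrder β] [DecidableEq α] [DecidableEq β]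
    (t : Finset (α × β)) (hne : t.Nonempty)
    (hch : ∀ p ∈ t, ∀ q ∈ t, (p.1 ≤ q.1 ∧ p.2 ≤ q.2) ∨ (q.1 ≤ p.1 ∧ q.2 ≤ p.2)) :
    t.card + 1 ≤ (t.image Prod.fst).card + (t.image Prod.snd).card := by
  classical
  induction t using Finset.strongInduction with
  | _ t ih =>
    obtain ⟨p, hp, hpmax⟩ := chain_exists_top t hne hch
    rcases Finset.eq_empty_or_nonempty (t.erase p) with he | hne'
    · have ht : t = {p} := by
        apply Finset.eq_singleton_iff_unique_mem.2
        exact ⟨hp, fun q hq => by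
          by_contra hqp
          exact absurd (Finset.mem_erase.2 ⟨hqp, hq⟩) (he ▸ Finset.notMem_empty q)⟩
      subst ht
      simp
    · set t' := t.erase p with ht'
      have hsub : t' ⊂ t := Finset.erase_ssubset hp
      have hch' : ∀ a ∈ t', ∀ b ∈ t', (a.1 ≤ b.1 ∧ a.2 ≤ b.2) ∨ (b.1 ≤ a.1 ∧ b.2 ≤ a.2) :=
        fun a ha b hb => hch a (Finset.mem_of_mem_erase ha) b (Finset.mem_of_mem_erase hb)
      have IH := ih t' hsub hne' hch'
      obtain ⟨q, hq, hqmax⟩ := chain_exists_top t' hne' hch'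
      have hqt : q ∈ t := Finset.mem_of_mem_erase hq
      have hqp : q ≠ p := (Finset.mem_erase.1 hq).1
      have hqlep := hpmax q hqt
      have htins : t = insert p t' := by rw [ht', Finset.insert_erase hp]
      have hcard : t.card = t'.card + 1 := by
        rw [htins, Finset.card_insert_of_notMem (Finset.notMem_erase p t)]
      have hstrict : q.1 < p.1 ∨ q.2 < p.2 := by
        rcases lt_or_eq_of_le hqlep.1 with h | h
        · exact Or.inl h
        · rcases lt_or_eq_of_le hqlep.2 with h2 | h2
          · exact Or.inr h2
          · exact absurd (Prod.ext h h2) hqp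
      have himg1 : t.image Prod.fst = insert p.1 (t'.image Prod.fst) := by
        rw [htins, Finset.image_insert]
      have himg2 : t.image Prod.snd = insert p.2 (t'.image Prod.snd) := by
        rw [htins, Finset.image_insert]
      rcases hstrict with h | h
      · have hnm : p.1 ∉ t'.image Prod.fst := by
          intro hm
          obtain ⟨r, hr, hre⟩ := Finset.mem_image.1 hm
          exact absurd (hre ▸ (hqmax r hr).1 : p.1 ≤ q.1) (not_le.2 h)
        have c1 : (t.image Prod.fst).card = (t'.image Prod.fst).card + 1 := by
          rw [himg1, Finset.card_insert_of_notMem hnm]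
        have c2 : (t'.image Prod.snd).card ≤ (t.image Prod.snd).card :=
          Finset.card_le_card (htins ▸ Finset.image_subset_image (Finset.subset_insert p t'))
        omega
      · have hnm : p.2 ∉ t'.image Prod.snd := by
          intro hm
          obtain ⟨r, hr, hre⟩ := Finset.mem_image.1 hm
          exact absurd (hre ▸ (hqmax r hr).2 : p.2 ≤ q.2) (not_le.2 h)
        have c1 : (t.image Prod.snd).card = (t'.image Prod.snd).card + 1 := by
          rw [himg2, Finset.card_insert_of_notMem hnm]
        have c2 : (t'.image Prod.fst).card ≤ (t.image Prod.fst).card :=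
          Finset.card_le_card (htins ▸ Finset.image_subset_image (Finset.subset_insert p t'))
        omega

end Aux

section Aux2

/-! #### diamOn lemmas -/

lemma diamOn_le_iff {X : Type*} {d : X → X → ℝ} {S : Set X} {c : ℝ≥0∞} :
    diamOn d S ≤ c ↔ ∀ x ∈ S, ∀ y ∈ S, ENNReal.ofReal (d x y) ≤ c := by
  simp [diamOn, iSup_le_iff]

lemma le_diamOn {X : Type*} {d : X → X → ℝ} {S : Set X} {x y : X}
    (hx : x ∈ S) (hy : y ∈ S) : ENNReal.ofReal (d x y) ≤ diamOn d S := by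
  calc ENNReal.ofReal (d x y) ≤ ⨆ y ∈ S, ENNReal.ofReal (d x y) :=
        le_iSup₂ (f := fun y (_ : y ∈ S) => ENNReal.ofReal (d x y)) y hy
    _ ≤ diamOn d S := le_iSup₂ (f := fun x (_ : x ∈ S) => ⨆ y ∈ S, ENNReal.ofReal (d x y)) x hx

lemma diamOn_empty {X : Type*} (d : X → X → ℝ) : diamOn d (∅ : Set X) = 0 := by
  simp [diamOn]

lemma diamOn_mono {X : Type*} (d : X → X → ℝ) {S S' : Set X} (h : S ⊆ S') :
    diamOn d S ≤ diamOn d S' :=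
  diamOn_le_iff.2 fun x hx y hy => le_diamOn (h hx) (h hy)

/-! #### Relabelling complexes -/

def FinSimpComplex.relabel {V W : Type} [DecidableEq V] [DecidableEq W]
    (K : FinSimpComplex V) (e : V ≃ W) : FinSimpComplex W where
  faces := K.faces.image (Finset.image e)
  nonempty_of_mem s hs := by
    obtain ⟨s₀, hs₀, rfl⟩ := Finset.mem_image.1 hs
    exact (K.nonempty_of_mem s₀ hs₀).image e
  down_closed s hs t hts htne := by
    obtain ⟨s₀, hs₀, rfl⟩ := Finset.mem_image.1 hs
    refine Finset.mem_image.2 ⟨t.image e.symm, K.down_closed s₀ hs₀ _ ?_ (htne.image _), ?_⟩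
    · intro a ha
      obtain ⟨b, hb, rfl⟩ := Finset.mem_image.1 ha
      obtain ⟨c, hc, rfl⟩ := Finset.mem_image.1 (hts hb)
      simpa using hc
    · ext b
      simp only [Finset.mem_image]
      constructor
      · rintro ⟨a, ⟨c, hc, rfl⟩, rfl⟩
        simpa using hc
      · intro hb
        exact ⟨e.symm b, ⟨b, hb, rfl⟩, e.apply_symm_apply b⟩

/-- `widim X d ε ≤ n` as soon as there is an `ε`-embedding into an `n`-dimensional complex
on an arbitrary finite vertex type. -/
lemma widim_le_of_complex {X : Type*} [TopologicalSpace X] {d : X → X → ℝ} {ε : ℝ}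
    (hε : 0 < ε) {n : ℕ} {V : Type} [Fintype V] [DecidableEq V]
    (K : FinSimpComplex V) (f : X → ↥K.space)
    (hd : K.dimLE n) (hf : IsEpsEmbedding d ε f) : widim X d ε ≤ n := by
  apply sInf_le
  refine ⟨n, rfl, Fintype.card V, ?_⟩
  set e := Fintype.equivFin V with he
  set K' := K.relabel e with hK'
  have hmem : ∀ x : ↥K.space, (fun w => (x : V → ℝ) (e.symm w)) ∈ K'.space := by
    rintro ⟨x, hx0, hx1, s, hs, hsupp⟩
    refine ⟨fun w => hx0 _, ?_, s.image e, Finset.mem_image_of_mem _ hs, ?_⟩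
    · exact (Fintype.sum_equiv e.symm _ _ fun w => rfl).trans hx1
    · intro w hw
      have := hsupp _ hw
      exact Finset.mem_image.2 ⟨e.symm w, this, e.apply_symm_apply w⟩
  set g : ↥K.space → ↥K'.space := fun x => ⟨fun w => (x : V → ℝ) (e.symm w), hmem x⟩ with hg
  have hginj : Function.Injective g := by
    intro x₁ x₂ h
    apply Subtype.ext
    funext v
    have := congrFun (congrArg Subtype.val h) (e v)
    simpa [hg] using this
  refine ⟨K', g ∘ f, ?_, ?_, ?_⟩
  · intro s hs
    obtain ⟨s₀, hs₀, rfl⟩ := Finset.mem_image.1 hs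
    rw [Finset.card_image_of_injective _ e.injective]
    exact hd s₀ hs₀
  · exact (continuous_pi fun w =>
      (continuous_apply (e.symm w)).comp (continuous_subtype_val.comp hf.1)).subtype_mk _
  · intro p
    rcases Set.eq_empty_or_nonempty ((g ∘ f) ⁻¹' {p}) with h | ⟨x₀, hx₀⟩
    · rw [h, diamOn_empty]
      exact ENNReal.ofReal_pos.2 hε
    · have hsub : (g ∘ f) ⁻¹' {p} ⊆ f ⁻¹' {f x₀} := by
        intro x hx
        have : g (f x) = g (f x₀) := by
          simp only [Set.mem_preimage, Set.mem_singleton_iff, Function.comp_apply] at hx hx₀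
          rw [hx, hx₀]
        exact hginj this
      exact lt_of_le_of_lt (diamOn_mono d hsub) (hf.2 (f x₀))

/-- If `widim` is finite it is attained by an embedding. -/
lemma widim_exists {X : Type*} [TopologicalSpace X] {d : X → X → ℝ} {ε : ℝ}
    (h : widim X d ε ≠ ⊤) :
    ∃ n : ℕ, widim X d ε = n ∧ ∃ (k : ℕ) (K : FinSimpComplex (Fin k)) (f : X → ↥K.space),
      K.dimLE n ∧ IsEpsEmbedding d ε f := by
  set P : ℕ → Prop := fun n => ∃ (k : ℕ) (K : FinSimpComplex (Fin k)) (f : X → ↥K.space),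
      K.dimLE n ∧ IsEpsEmbedding d ε f with hP
  have hSne : {n : ℕ | P n}.Nonempty := by
    by_contra hemp
    rw [Set.not_nonempty_iff_eq_empty] at hemp
    apply h
    have : {r : ℝ≥0∞ | ∃ n : ℕ, (n : ℝ≥0∞) = r ∧ P n} = ∅ := by
      ext r
      simp only [Set.mem_setOf_eq, Set.mem_empty_iff_false, iff_false]
      rintro ⟨n, -, hn⟩
      have hmem : n ∈ {n : ℕ | P n} := hn
      rw [hemp] at hmem
      exact hmem
    rw [widim, this, sInf_empty]
  have hm : P (sInf {n : ℕ | P n}) := Nat.sInf_mem hSne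
  refine ⟨sInf {n : ℕ | P n}, le_antisymm (sInf_le ⟨_, rfl, hm⟩) (le_sInf ?_), hm⟩
  rintro r ⟨n, rfl, hn⟩
  exact_mod_cast Nat.sInf_le hn

/-- Pullback monotonicity of `widim`. -/
lemma widim_le_of_map {X Z : Type*} [TopologicalSpace X] [TopologicalSpace Z]
    {dX : X → X → ℝ} {dZ : Z → Z → ℝ} {ε : ℝ} (g : X → Z) (hg : Continuous g)
    (hd : ∀ a b, dX a b ≤ dZ (g a) (g b)) : widim X dX ε ≤ widim Z dZ ε := by
  rcases eq_or_ne (widim Z dZ ε) ⊤ with h | h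
  · rw [h]; exact le_top
  obtain ⟨n, hn, k, K, f, hdim, hf⟩ := widim_exists h
  rw [hn]
  apply sInf_le
  refine ⟨n, rfl, k, K, f ∘ g, hdim, (hf.1.comp hg), fun p => ?_⟩
  refine lt_of_le_of_lt ?_ (hf.2 p)
  rw [diamOn_le_iff]
  intro x hx y hy
  exact le_trans (ENNReal.ofReal_le_ofReal (hd x y)) (le_diamOn hx hy)

end Aux2

section Aux3

/-! #### The product complex and `widim` of a max of two distances -/

open Classical in
/-- The staircase product complex of two complexes. -/
noncomputable def prodComplex {k₁ k₂ : ℕ} (K₁ : FinSimpComplex (Fin k₁))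
    (K₂ : FinSimpComplex (Fin k₂)) : FinSimpComplex (Fin k₁ × Fin k₂) where
  faces := Finset.univ.powerset.filter fun t =>
    t.Nonempty ∧ (∀ p ∈ t, ∀ q ∈ t, (p.1 ≤ q.1 ∧ p.2 ≤ q.2) ∨ (q.1 ≤ p.1 ∧ q.2 ≤ p.2)) ∧
    t.image Prod.fst ∈ K₁.faces ∧ t.image Prod.snd ∈ K₂.faces
  nonempty_of_mem s hs := ((Finset.mem_filter.1 hs).2).1
  down_closed s hs t hts htne := by
    obtain ⟨-, -, hch, h1, h2⟩ := Finset.mem_filter.1 hs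
    refine Finset.mem_filter.2 ⟨Finset.mem_powerset.2 (Finset.subset_univ t), htne,
      fun p hp q hq => hch p (hts hp) q (hts hq), ?_, ?_⟩
    · exact K₁.down_closed _ h1 _ (Finset.image_subset_image hts) (htne.image _)
    · exact K₂.down_closed _ h2 _ (Finset.image_subset_image hts) (htne.image _)

lemma prodComplex_dimLE {k₁ k₂ : ℕ} {K₁ : FinSimpComplex (Fin k₁)}
    {K₂ : FinSimpComplex (Fin k₂)} {n₁ n₂ : ℕ}
    (h1 : K₁.dimLE n₁) (h2 : K₂.dimLE n₂) : (prodComplex K₁ K₂).dimLE (n₁ + n₂) := by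
  intro s hs
  obtain ⟨-, hne, hch, hf1, hf2⟩ := Finset.mem_filter.1 hs
  have := chain_card_le s hne hch
  have c1 := h1 _ hf1
  have c2 := h2 _ hf2
  omega

lemma couple_mem_space {k₁ k₂ : ℕ} {K₁ : FinSimpComplex (Fin k₁)}
    {K₂ : FinSimpComplex (Fin k₂)} {x : Fin k₁ → ℝ} {y : Fin k₂ → ℝ}
    (hx : x ∈ K₁.space) (hy : y ∈ K₂.space) :
    (fun p => couple x y p) ∈ (prodComplex K₁ K₂).space := by
  classical
  obtain ⟨hx0, hx1, s₁, hs₁, hsupp₁⟩ := hx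
  obtain ⟨hy0, hy1, s₂, hs₂, hsupp₂⟩ := hy
  have hsum : ∑ p : Fin k₁ × Fin k₂, couple x y p = 1 := by
    rw [Fintype.sum_prod_type]
    rw [Finset.sum_congr rfl fun v _ => couple_marginal_fst hx0 hy0 hx1 hy1 v]
    exact hx1
  have himg1 : (Finset.univ.filter fun p : Fin k₁ × Fin k₂ => couple x y p ≠ 0).image Prod.fst
      = Finset.univ.filter fun v => x v ≠ 0 := by
    ext v
    simp only [Finset.mem_image, Finset.mem_filter, Finset.mem_univ, true_and]
    constructor
    · rintro ⟨p, hp, rfl⟩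
      intro hxv
      have hzero : ∑ w, couple x y (p.1, w) = 0 := by
        rw [couple_marginal_fst hx0 hy0 hx1 hy1, hxv]
      rw [Finset.sum_eq_zero_iff_of_nonneg (fun w _ => couple_nonneg x y (p.1, w))] at hzero
      exact hp (by rw [← Prod.mk.eta (p := p)]; exact hzero p.2 (Finset.mem_univ _))
    · intro hxv
      have : ∑ w, couple x y (v, w) ≠ 0 := by
        rw [couple_marginal_fst hx0 hy0 hx1 hy1]; exact hxv
      obtain ⟨w, -, hw⟩ := Finset.exists_ne_zero_of_sum_ne_zero this
      exact ⟨(v, w), hw, rfl⟩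
  have himg2 : (Finset.univ.filter fun p : Fin k₁ × Fin k₂ => couple x y p ≠ 0).image Prod.snd
      = Finset.univ.filter fun w => y w ≠ 0 := by
    ext w
    simp only [Finset.mem_image, Finset.mem_filter, Finset.mem_univ, true_and]
    constructor
    · rintro ⟨p, hp, rfl⟩
      intro hyw
      have hzero : ∑ v, couple x y (v, p.2) = 0 := by
        rw [couple_marginal_snd hx0 hy0 hx1 hy1, hyw]
      rw [Finset.sum_eq_zero_iff_of_nonneg (fun v _ => couple_nonneg x y (v, p.2))] at hzero
      exact hp (by rw [← Prod.mk.eta (p := p)]; exact hzero p.1 (Finset.mem_univ _))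
    · intro hyw
      have : ∑ v, couple x y (v, w) ≠ 0 := by
        rw [couple_marginal_snd hx0 hy0 hx1 hy1]; exact hyw
      obtain ⟨v, -, hv⟩ := Finset.exists_ne_zero_of_sum_ne_zero this
      exact ⟨(v, w), hv, rfl⟩
  refine ⟨fun p => couple_nonneg x y p, hsum, Finset.univ.filter fun p => couple x y p ≠ 0,
    ?_, fun p hp => Finset.mem_filter.2 ⟨Finset.mem_univ _, hp⟩⟩
  refine Finset.mem_filter.2 ⟨Finset.mem_powerset.2 (Finset.subset_univ _), ?_, ?_, ?_, ?_⟩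
  · obtain ⟨p, -, hp⟩ := Finset.exists_ne_zero_of_sum_ne_zero (hsum ▸ one_ne_zero)
    exact ⟨p, Finset.mem_filter.2 ⟨Finset.mem_univ _, hp⟩⟩
  · intro p hp q hq
    exact couple_chain hx0 hy0 (Finset.mem_filter.1 hp).2 (Finset.mem_filter.1 hq).2
  · rw [himg1]
    refine K₁.down_closed s₁ hs₁ _ (fun v hv => hsupp₁ v (Finset.mem_filter.1 hv).2) ?_
    obtain ⟨v, -, hv⟩ := Finset.exists_ne_zero_of_sum_ne_zero (hx1 ▸ one_ne_zero)
    exact ⟨v, Finset.mem_filter.2 ⟨Finset.mem_univ _, hv⟩⟩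
  · rw [himg2]
    refine K₂.down_closed s₂ hs₂ _ (fun w hw => hsupp₂ w (Finset.mem_filter.1 hw).2) ?_
    obtain ⟨w, -, hw⟩ := Finset.exists_ne_zero_of_sum_ne_zero (hy1 ▸ one_ne_zero)
    exact ⟨w, Finset.mem_filter.2 ⟨Finset.mem_univ _, hw⟩⟩

/-- Key lemma: `widim` w.r.t. the max of two distances is at most the sum of the `widim`s. -/
lemma widim_max_le_add {X : Type*} [TopologicalSpace X] (d d' : X → X → ℝ) {ε : ℝ}
    (hε : 0 < ε) :
    widim X (fun a b => max (d a b) (d' a b)) ε ≤ widim X d ε + widim X d' ε := by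
  rcases eq_or_ne (widim X d ε) ⊤ with h1 | h1
  · rw [h1, top_add]; exact le_top
  rcases eq_or_ne (widim X d' ε) ⊤ with h2 | h2
  · rw [h2, add_top]; exact le_top
  obtain ⟨n₁, hn₁, k₁, K₁, f₁, hdim₁, hf₁⟩ := widim_exists h1
  obtain ⟨n₂, hn₂, k₂, K₂, f₂, hdim₂, hf₂⟩ := widim_exists h2
  rw [hn₁, hn₂, ← Nat.cast_add]
  set F : X → ↥(prodComplex K₁ K₂).space := fun x =>
    ⟨fun p => couple ((f₁ x) : Fin k₁ → ℝ) ((f₂ x) : Fin k₂ → ℝ) p,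
      couple_mem_space (f₁ x).2 (f₂ x).2⟩ with hF
  have hFinj : ∀ a b : X, F a = F b → f₁ a = f₁ b ∧ f₂ a = f₂ b := by
    intro a b h
    have hx0a := (f₁ a).2.1
    have hx1a := (f₁ a).2.2.1
    have hy0a := (f₂ a).2.1
    have hy1a := (f₂ a).2.2.1
    have hx0b := (f₁ b).2.1
    have hx1b := (f₁ b).2.2.1
    have hy0b := (f₂ b).2.1
    have hy1b := (f₂ b).2.2.1
    have hc : ∀ p, couple ((f₁ a) : Fin k₁ → ℝ) ((f₂ a) : Fin k₂ → ℝ) p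
        = couple ((f₁ b) : Fin k₁ → ℝ) ((f₂ b) : Fin k₂ → ℝ) p :=
      fun p => congrFun (congrArg Subtype.val h) p
    constructor
    · apply Subtype.ext; funext v
      rw [← couple_marginal_fst hx0a hy0a hx1a hy1a v,
        ← couple_marginal_fst hx0b hy0b hx1b hy1b v]
      exact Finset.sum_congr rfl fun w _ => hc (v, w)
    · apply Subtype.ext; funext w
      rw [← couple_marginal_snd hx0a hy0a hx1a hy1a w,
        ← couple_marginal_snd hx0b hy0b hx1b hy1b w]
      exact Finset.sum_congr rfl fun v _ => hc (v, w)
  apply widim_le_of_complex hε (prodComplex K₁ K₂) F (prodComplex_dimLE hdim₁ hdim₂)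
  constructor
  · apply Continuous.subtype_mk
    apply continuous_pi
    intro p
    have hc1 : Continuous fun x : X => ((f₁ x) : Fin k₁ → ℝ) :=
      continuous_subtype_val.comp hf₁.1
    have hc2 : Continuous fun x : X => ((f₂ x) : Fin k₂ → ℝ) :=
      continuous_subtype_val.comp hf₂.1
    unfold couple
    exact continuous_const.max ((((continuous_cdf.comp hc1).min
      (continuous_cdf.comp hc2)).sub ((continuous_cdf.comp hc1).max
      (continuous_cdf.comp hc2))))
  · intro p
    rcases Set.eq_empty_or_nonempty (F ⁻¹' {p}) with h | ⟨x₀, hx₀⟩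
    · rw [h, diamOn_empty]
      exact ENNReal.ofReal_pos.2 hε
    · have key : diamOn (fun a b => max (d a b) (d' a b)) (F ⁻¹' {p})
          ≤ max (diamOn d (f₁ ⁻¹' {f₁ x₀})) (diamOn d' (f₂ ⁻¹' {f₂ x₀})) := by
        rw [diamOn_le_iff]
        intro a ha b hb
        simp only [Set.mem_preimage, Set.mem_singleton_iff] at ha hb hx₀
        have hab := hFinj a b (ha.trans hb.symm)
        have ha1 := (hFinj a x₀ (ha.trans hx₀.symm)).1
        have ha2 := (hFinj a x₀ (ha.trans hx₀.symm)).2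
        have hb1 := (hFinj b x₀ (hb.trans hx₀.symm)).1
        have hb2 := (hFinj b x₀ (hb.trans hx₀.symm)).2
        have e1 : ENNReal.ofReal (max (d a b) (d' a b))
            = max (ENNReal.ofReal (d a b)) (ENNReal.ofReal (d' a b)) :=
          Monotone.map_max (fun _ _ h => ENNReal.ofReal_le_ofReal h)
        rw [e1]
        apply max_le_max
        · exact le_diamOn (show a ∈ f₁ ⁻¹' {f₁ x₀} by simp [ha1])
            (show b ∈ f₁ ⁻¹' {f₁ x₀} by simp [hb1])
        · exact le_diamOn (show a ∈ f₂ ⁻¹' {f₂ x₀} by simp [ha2])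
            (show b ∈ f₂ ⁻¹' {f₂ x₀} by simp [hb2])
      exact lt_of_le_of_lt key (max_lt (hf₁.2 (f₁ x₀)) (hf₂.2 (f₂ x₀)))

end Aux3


section Aux4

/-! #### Dynamical distances -/

lemma fold_max_nonneg (f : ℕ → ℝ) (s : Finset ℕ) : 0 ≤ s.fold max 0 f := by
  rw [Finset.le_fold_max]
  exact Or.inl le_rfl

lemma fold_max_range_add (f : ℕ → ℝ) (N M : ℕ) :
    (Finset.range (N + M)).fold max 0 f
      = max ((Finset.range N).fold max 0 f)
          ((Finset.range M).fold max 0 fun n => f (N + n)) := by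
  induction M with
  | zero =>
    simp only [Nat.add_zero, Finset.range_zero, Finset.fold_empty]
    exact (max_eq_left (fold_max_nonneg f _)).symm
  | succ M ih =>
    rw [show N + (M + 1) = (N + M) + 1 from rfl, Finset.range_add_one,
      Finset.fold_insert Finset.notMem_range_self, ih, Finset.range_add_one,
      Finset.fold_insert Finset.notMem_range_self, max_left_comm]

lemma fold_max_pair (a b : ℕ → ℝ) (N : ℕ) :
    (Finset.range N).fold max 0 (fun n => max (a n) (b n))
      = max ((Finset.range N).fold max 0 a) ((Finset.range N).fold max 0 b) := by
  induction N with
  | zero => simp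
  | succ N ih =>
    rw [Finset.range_add_one, Finset.fold_insert Finset.notMem_range_self,
      Finset.fold_insert Finset.notMem_range_self,
      Finset.fold_insert Finset.notMem_range_self, ih, max_max_max_comm]

lemma dynDist_add {X : Type*} (d : X → X → ℝ) (T : X → X) (N M : ℕ) (x y : X) :
    dynDist d T (N + M) x y
      = max (dynDist d T N x y) (dynDist d T M (T^[N] x) (T^[N] y)) := by
  unfold dynDist
  rw [fold_max_range_add]
  congr 1
  apply Finset.fold_congr
  intro n _
  rw [Nat.add_comm N n, Function.iterate_add_apply, Function.iterate_add_apply]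

lemma prodCongr_iterate {X₁ X₂ : Type*} [TopologicalSpace X₁] [TopologicalSpace X₂]
    (T₁ : X₁ ≃ₜ X₁) (T₂ : X₂ ≃ₜ X₂) (n : ℕ) (p : X₁ × X₂) :
    (⇑(T₁.prodCongr T₂))^[n] p = ((⇑T₁)^[n] p.1, (⇑T₂)^[n] p.2) := by
  induction n with
  | zero => simp
  | succ n ih =>
    rw [Function.iterate_succ_apply', Function.iterate_succ_apply',
      Function.iterate_succ_apply', ih, Homeomorph.coe_prodCongr]
    rfl

lemma dynDist_prod {X₁ X₂ : Type*} [MetricSpace X₁] [MetricSpace X₂]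
    (T₁ : X₁ ≃ₜ X₁) (T₂ : X₂ ≃ₜ X₂) (N : ℕ) (p q : X₁ × X₂) :
    dynDist dist (⇑(T₁.prodCongr T₂)) N p q
      = max (dynDist dist (⇑T₁) N p.1 q.1) (dynDist dist (⇑T₂) N p.2 q.2) := by
  unfold dynDist
  rw [← fold_max_pair]
  apply Finset.fold_congr
  intro n _
  rw [prodCongr_iterate, prodCongr_iterate]
  exact Prod.dist_eq

/-! #### Fiberwise `widim` estimates -/

lemma wfib_add {X Y : Type*} [TopologicalSpace X] (d : X → X → ℝ) {T : X → X}
    (hT : Continuous T) {S : Y → Y} {π : X → Y} (heq : ∀ x, π (T x) = S (π x))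
    {ε : ℝ} (hε : 0 < ε) (N M : ℕ) :
    (⨆ y : Y, widim ↥(π ⁻¹' {y}) (fun a b => dynDist d T (N + M) a.1 b.1) ε)
      ≤ (⨆ y : Y, widim ↥(π ⁻¹' {y}) (fun a b => dynDist d T N a.1 b.1) ε)
        + ⨆ y : Y, widim ↥(π ⁻¹' {y}) (fun a b => dynDist d T M a.1 b.1) ε := by
  apply iSup_le
  intro y
  have hsemi : ∀ (n : ℕ) (x : X), π (T^[n] x) = S^[n] (π x) :=
    fun n x => ((show Function.Semiconj π T S from heq).iterate_right n) x
  have hsplit : (fun a b : ↥(π ⁻¹' {y}) => dynDist d T (N + M) a.1 b.1)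
      = fun a b => max (dynDist d T N a.1 b.1) (dynDist d T M (T^[N] a.1) (T^[N] b.1)) := by
    funext a b; exact dynDist_add d T N M a.1 b.1
  rw [hsplit]
  refine (widim_max_le_add _ _ hε).trans (add_le_add
    (le_iSup (fun y : Y => widim ↥(π ⁻¹' {y}) (fun a b => dynDist d T N a.1 b.1) ε) y) ?_)
  have hmap : ∀ a : ↥(π ⁻¹' {y}), T^[N] a.1 ∈ π ⁻¹' {S^[N] y} := by
    intro a
    have ha : π a.1 = y := a.2
    simp [Set.mem_preimage, hsemi N a.1, ha]
  have h2 : widim ↥(π ⁻¹' {y}) (fun a b => dynDist d T M (T^[N] a.1) (T^[N] b.1)) ε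
      ≤ widim ↥(π ⁻¹' {S^[N] y}) (fun a b => dynDist d T M a.1 b.1) ε := by
    refine widim_le_of_map (fun a => ⟨T^[N] a.1, hmap a⟩) ?_ fun a b => le_rfl
    exact ((hT.iterate N).comp continuous_subtype_val).subtype_mk _
  exact h2.trans
    (le_iSup (fun y : Y => widim ↥(π ⁻¹' {y}) (fun a b => dynDist d T M a.1 b.1) ε) (S^[N] y))

lemma wfib_mul {X Y : Type*} [TopologicalSpace X] (d : X → X → ℝ) {T : X → X}
    (hT : Continuous T) {S : Y → Y} {π : X → Y} (heq : ∀ x, π (T x) = S (π x))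
    {ε : ℝ} (hε : 0 < ε) (N : ℕ) {M : ℕ} (hM : 1 ≤ M) :
    (⨆ y : Y, widim ↥(π ⁻¹' {y}) (fun a b => dynDist d T (N * M) a.1 b.1) ε)
      ≤ (M : ℝ≥0∞) * ⨆ y : Y, widim ↥(π ⁻¹' {y}) (fun a b => dynDist d T N a.1 b.1) ε := by
  induction M, hM using Nat.le_induction with
  | base => rw [Nat.mul_one, Nat.cast_one, one_mul]
  | succ M hM ih =>
    rw [show N * (M + 1) = N * M + N from by ring]
    calc (⨆ y : Y, widim ↥(π ⁻¹' {y}) (fun a b => dynDist d T (N * M + N) a.1 b.1) ε)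
        ≤ (⨆ y : Y, widim ↥(π ⁻¹' {y}) (fun a b => dynDist d T (N * M) a.1 b.1) ε)
          + ⨆ y : Y, widim ↥(π ⁻¹' {y}) (fun a b => dynDist d T N a.1 b.1) ε :=
          wfib_add d hT heq hε _ _
      _ ≤ (M : ℝ≥0∞) * (⨆ y : Y, widim ↥(π ⁻¹' {y}) (fun a b => dynDist d T N a.1 b.1) ε)
          + ⨆ y : Y, widim ↥(π ⁻¹' {y}) (fun a b => dynDist d T N a.1 b.1) ε :=
          add_le_add ih le_rfl
      _ = ((M + 1 : ℕ) : ℝ≥0∞)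
          * ⨆ y : Y, widim ↥(π ⁻¹' {y}) (fun a b => dynDist d T N a.1 b.1) ε := by
          rw [Nat.cast_add, Nat.cast_one, add_mul, one_mul]

lemma wfib_prod {X₁ X₂ Y₁ Y₂ : Type} [MetricSpace X₁] [MetricSpace X₂]
    (T₁ : X₁ ≃ₜ X₁) (T₂ : X₂ ≃ₜ X₂) (π₁ : X₁ → Y₁) (π₂ : X₂ → Y₂)
    {ε : ℝ} (hε : 0 < ε) (N : ℕ) :
    (⨆ y : Y₁ × Y₂, widim ↥((fun p : X₁ × X₂ => (π₁ p.1, π₂ p.2)) ⁻¹' {y})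
        (fun a b => dynDist dist (⇑(T₁.prodCongr T₂)) N a.1 b.1) ε)
      ≤ (⨆ y₁ : Y₁, widim ↥(π₁ ⁻¹' {y₁}) (fun a b => dynDist dist (⇑T₁) N a.1 b.1) ε)
        + ⨆ y₂ : Y₂, widim ↥(π₂ ⁻¹' {y₂}) (fun a b => dynDist dist (⇑T₂) N a.1 b.1) ε := by
  apply iSup_le
  rintro ⟨y₁, y₂⟩
  have hsplit : (fun a b : ↥((fun p : X₁ × X₂ => (π₁ p.1, π₂ p.2)) ⁻¹' {(y₁, y₂)}) =>
      dynDist dist (⇑(T₁.prodCongr T₂)) N a.1 b.1)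
      = fun a b => max (dynDist dist (⇑T₁) N a.1.1 b.1.1) (dynDist dist (⇑T₂) N a.1.2 b.1.2) := by
    funext a b; exact dynDist_prod T₁ T₂ N a.1 b.1
  rw [hsplit]
  refine (widim_max_le_add _ _ hε).trans (add_le_add ?_ ?_)
  · have hm : ∀ a : ↥((fun p : X₁ × X₂ => (π₁ p.1, π₂ p.2)) ⁻¹' {(y₁, y₂)}),
        a.1.1 ∈ π₁ ⁻¹' {y₁} := by
      intro a
      have ha := a.2
      simp only [Set.mem_preimage, Set.mem_singleton_iff, Prod.mk.injEq] at ha ⊢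
      exact ha.1
    have h2 : widim ↥((fun p : X₁ × X₂ => (π₁ p.1, π₂ p.2)) ⁻¹' {(y₁, y₂)})
        (fun a b => dynDist dist (⇑T₁) N a.1.1 b.1.1) ε
        ≤ widim ↥(π₁ ⁻¹' {y₁}) (fun a b => dynDist dist (⇑T₁) N a.1 b.1) ε := by
      refine widim_le_of_map (fun a => ⟨a.1.1, hm a⟩) ?_ fun a b => le_rfl
      exact (continuous_fst.comp continuous_subtype_val).subtype_mk _
    exact h2.trans (le_iSup
      (fun y₁ : Y₁ => widim ↥(π₁ ⁻¹' {y₁}) (fun a b => dynDist dist (⇑T₁) N a.1 b.1) ε) y₁)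
  · have hm : ∀ a : ↥((fun p : X₁ × X₂ => (π₁ p.1, π₂ p.2)) ⁻¹' {(y₁, y₂)}),
        a.1.2 ∈ π₂ ⁻¹' {y₂} := by
      intro a
      have ha := a.2
      simp only [Set.mem_preimage, Set.mem_singleton_iff, Prod.mk.injEq] at ha ⊢
      exact ha.2
    have h2 : widim ↥((fun p : X₁ × X₂ => (π₁ p.1, π₂ p.2)) ⁻¹' {(y₁, y₂)})
        (fun a b => dynDist dist (⇑T₂) N a.1.2 b.1.2) ε
        ≤ widim ↥(π₂ ⁻¹' {y₂}) (fun a b => dynDist dist (⇑T₂) N a.1 b.1) ε := by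
      refine widim_le_of_map (fun a => ⟨a.1.2, hm a⟩) ?_ fun a b => le_rfl
      exact (continuous_snd.comp continuous_subtype_val).subtype_mk _
    exact h2.trans (le_iSup
      (fun y₂ : Y₂ => widim ↥(π₂ ⁻¹' {y₂}) (fun a b => dynDist dist (⇑T₂) N a.1 b.1) ε) y₂)

end Aux4

/-- **Lemma 4.1 (first inequality).** For factor maps `π_i : (X_i,T_i) → (Y_i,S_i)`
(`i = 1,2`), the product factor map
`π₁ × π₂ : (X₁ × X₂, T₁ × T₂) → (Y₁ × Y₂, S₁ × S₂)` satisfies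
`mdim(π₁ × π₂, T₁ × T₂) ≤ mdim(π₁,T₁) + mdim(π₂,T₂)`.
(The product carries the max metric, which is the metric of `X₁ × X₂`.) -/
theorem mdimRel_prod_le_add
    {X₁ X₂ Y₁ Y₂ : Type} [MetricSpace X₁] [CompactSpace X₁] [MetricSpace X₂] [CompactSpace X₂]
    [MetricSpace Y₁] [CompactSpace Y₁] [MetricSpace Y₂] [CompactSpace Y₂]
    (T₁ : X₁ ≃ₜ X₁) (T₂ : X₂ ≃ₜ X₂) (S₁ : Y₁ ≃ₜ Y₁) (S₂ : Y₂ ≃ₜ Y₂)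
    (π₁ : X₁ → Y₁) (π₂ : X₂ → Y₂)
    (h₁ : IsFactorMap ⇑T₁ ⇑S₁ π₁) (h₂ : IsFactorMap ⇑T₂ ⇑S₂ π₂) :
    mdimRel dist ⇑(T₁.prodCongr T₂) (fun p : X₁ × X₂ => (π₁ p.1, π₂ p.2)) ≤
      mdimRel dist ⇑T₁ π₁ + mdimRel dist ⇑T₂ π₂ := by
  simp only [mdimRel]
  refine iSup₂_le fun ε hε => ?_
  refine le_trans ?_ (add_le_add
    (le_iSup₂ (f := fun (ε : ℝ) (_ : 0 < ε) => ⨅ (N : ℕ) (_ : 0 < N),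
      (⨆ y₁ : Y₁, widim ↥(π₁ ⁻¹' {y₁}) (fun a b => dynDist dist (⇑T₁) N a.1 b.1) ε) / N) ε hε)
    (le_iSup₂ (f := fun (ε : ℝ) (_ : 0 < ε) => ⨅ (N : ℕ) (_ : 0 < N),
      (⨆ y₂ : Y₂, widim ↥(π₂ ⁻¹' {y₂}) (fun a b => dynDist dist (⇑T₂) N a.1 b.1) ε) / N) ε hε))
  simp_rw [ENNReal.iInf_add, ENNReal.add_iInf]
  refine le_iInf fun N => le_iInf fun hN => le_iInf fun M => le_iInf fun hM => ?_
  have hstep1 : (⨆ y : Y₁ × Y₂, widim ↥((fun p : X₁ × X₂ => (π₁ p.1, π₂ p.2)) ⁻¹' {y})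
        (fun a b => dynDist dist (⇑(T₁.prodCongr T₂)) (N * M) a.1 b.1) ε)
      ≤ (M : ℝ≥0∞) * (⨆ y₁ : Y₁, widim ↥(π₁ ⁻¹' {y₁}) (fun a b => dynDist dist (⇑T₁) N a.1 b.1) ε)
        + (N : ℝ≥0∞) * ⨆ y₂ : Y₂, widim ↥(π₂ ⁻¹' {y₂}) (fun a b => dynDist dist (⇑T₂) M a.1 b.1) ε := by
    refine (wfib_prod T₁ T₂ π₁ π₂ hε (N * M)).trans (add_le_add ?_ ?_)
    · exact wfib_mul dist T₁.continuous h₁.equivariant hε N hM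
    · rw [Nat.mul_comm]
      exact wfib_mul dist T₂.continuous h₂.equivariant hε M hN
  have hM0 : (M : ℝ≥0∞) ≠ 0 := Nat.cast_ne_zero.2 hM.ne'
  have hN0 : (N : ℝ≥0∞) ≠ 0 := Nat.cast_ne_zero.2 hN.ne'
  calc (⨅ (L : ℕ) (_ : 0 < L), (⨆ y : Y₁ × Y₂,
          widim ↥((fun p : X₁ × X₂ => (π₁ p.1, π₂ p.2)) ⁻¹' {y})
            (fun a b => dynDist dist (⇑(T₁.prodCongr T₂)) L a.1 b.1) ε) / L)
      ≤ (⨆ y : Y₁ × Y₂, widim ↥((fun p : X₁ × X₂ => (π₁ p.1, π₂ p.2)) ⁻¹' {y})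
            (fun a b => dynDist dist (⇑(T₁.prodCongr T₂)) (N * M) a.1 b.1) ε)
          / ((N * M : ℕ) : ℝ≥0∞) :=
        iInf_le_of_le (N * M) (iInf_le_of_le (Nat.mul_pos hN hM) le_rfl)
    _ ≤ ((M : ℝ≥0∞) * (⨆ y₁ : Y₁, widim ↥(π₁ ⁻¹' {y₁})
            (fun a b => dynDist dist (⇑T₁) N a.1 b.1) ε)
          + (N : ℝ≥0∞) * ⨆ y₂ : Y₂, widim ↥(π₂ ⁻¹' {y₂})
            (fun a b => dynDist dist (⇑T₂) M a.1 b.1) ε) / ((N * M : ℕ) : ℝ≥0∞) :=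
        ENNReal.div_le_div_right hstep1 _
    _ = (⨆ y₁ : Y₁, widim ↥(π₁ ⁻¹' {y₁}) (fun a b => dynDist dist (⇑T₁) N a.1 b.1) ε) / (N : ℝ≥0∞)
          + (⨆ y₂ : Y₂, widim ↥(π₂ ⁻¹' {y₂}) (fun a b => dynDist dist (⇑T₂) M a.1 b.1) ε)
            / (M : ℝ≥0∞) := by
        rw [Nat.cast_mul, ENNReal.add_div]
        congr 1
        · rw [mul_comm (N : ℝ≥0∞) (M : ℝ≥0∞)]
          exact ENNReal.mul_div_mul_left _ _ hM0 (ENNReal.natCast_ne_top M)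
        · exact ENNReal.mul_div_mul_left _ _ hN0 (ENNReal.natCast_ne_top N)
end

section
/- Let (X,T) be a dynamical system and E ⊂ X a closed subset. For any positive number δ there exists an open neighborhood U of E such that ocap(U) < ocap(E) + δ. -/
open scoped ENNReal

open scoped Classical in
private lemma sum_indicator_eq_card {X : Type*} (T : X → X) (A : Set X) (N : ℕ) (x : X) :
    ∑ n ∈ Finset.range N, A.indicator (fun _ => (1 : ℝ≥0∞)) (T^[n] x)
      = (((Finset.range N).filter fun n => T^[n] x ∈ A).card : ℝ≥0∞) := by
  rw [Finset.card_filter]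
  push_cast
  simp [Set.indicator_apply]

open scoped Classical in
private lemma key_open {X : Type*} [MetricSpace X] [CompactSpace X]
    (T : X → X) (hT : Continuous T) (E : Set X) (hE : IsClosed E) (N k : ℕ)
    (hk : ∀ x, ((Finset.range N).filter fun n => T^[n] x ∈ E).card ≤ k) :
    ∃ U : Set X, IsOpen U ∧ E ⊆ U ∧
      ∀ x, ((Finset.range N).filter fun n => T^[n] x ∈ U).card ≤ k := by
  rcases le_or_gt N k with hNk | hkN
  · refine ⟨Set.univ, isOpen_univ, Set.subset_univ _, fun x => by
      simpa using hNk⟩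
  by_contra hcon
  push_neg at hcon
  have hstep : ∀ m : ℕ, ∃ x : X,
      k < ((Finset.range N).filter fun n =>
        T^[n] x ∈ Metric.thickening (1/(m+1)) E).card := fun m =>
    hcon (Metric.thickening (1/(m+1)) E) Metric.isOpen_thickening
      (Metric.self_subset_thickening (by positivity) E)
  choose x hx using hstep
  set P : Finset (Finset ℕ) := (Finset.range N).powersetCard (k+1) with hP
  set F : ℕ → Set X := fun m => ⋃ S ∈ P, ⋂ n ∈ S,
      (T^[n]) ⁻¹' (Metric.cthickening (1/(m+1)) E) with hF
  have hclosed : ∀ m, IsClosed (F m) := fun m =>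
    P.finite_toSet.isClosed_biUnion fun S _ =>
      isClosed_biInter fun n _ => Metric.isClosed_cthickening.preimage (hT.iterate n)
  have hanti : ∀ m, F (m+1) ⊆ F m := by
    intro m
    simp only [hF]
    refine Set.iUnion₂_mono fun S hS => Set.iInter₂_mono fun n hn =>
      Set.preimage_mono (Metric.cthickening_mono ?_ E)
    have h1 : (0:ℝ) < (m:ℝ) + 1 := by positivity
    have h2 : (m:ℝ) + 1 ≤ (m:ℝ) + 1 + 1 := by linarith
    push_cast
    rw [div_le_div_iff₀ (by positivity) h1]
    nlinarith
  have hne : ∀ m, (F m).Nonempty := by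
    intro m
    obtain ⟨S, hSsub, hScard⟩ := Finset.exists_subset_card_eq (hx m)
    refine ⟨x m, Set.mem_iUnion₂.2 ⟨S, ?_, Set.mem_iInter₂.2 fun n hn => ?_⟩⟩
    · exact Finset.mem_powersetCard.2 ⟨hSsub.trans (Finset.filter_subset _ _), hScard⟩
    · exact Metric.thickening_subset_cthickening _ _
        (Finset.mem_filter.1 (hSsub hn)).2
  obtain ⟨z, hz⟩ := IsCompact.nonempty_iInter_of_sequence_nonempty_isCompact_isClosed
    F hanti hne (hclosed 0).isCompact hclosed
  have hz' : ∀ m : ℕ, ∃ S ∈ P, z ∈ ⋂ n ∈ S,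
      (T^[n]) ⁻¹' (Metric.cthickening (1/(m+1)) E) := by
    intro m
    have hzm := Set.mem_iInter.1 hz m
    rw [hF] at hzm
    obtain ⟨S, hS, hmem⟩ := Set.mem_iUnion₂.1 hzm
    exact ⟨S, hS, hmem⟩
  choose g hgP hgmem using hz'
  obtain ⟨S, hSinf⟩ := Finite.exists_infinite_fiber (fun m => (⟨g m, hgP m⟩ : {S // S ∈ P}))
  have hSinf' : {m | g m = (S : Finset ℕ)}.Infinite :=
    (Set.infinite_coe_iff.1 hSinf).mono fun m hm => by
      have h : (⟨g m, hgP m⟩ : {S // S ∈ P}) = S := hm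
      simpa [Set.mem_setOf_eq] using congrArg Subtype.val h
  have hmemE : ∀ n ∈ (S : Finset ℕ), T^[n] z ∈ E := by
    intro n hn
    have hcl : T^[n] z ∈ closure E := by
      rw [EMetric.mem_closure_iff_infEdist_zero]
      refine le_antisymm (ENNReal.le_of_forall_pos_le_add fun ε hε _ => ?_) zero_le
      obtain ⟨m, hm⟩ := exists_nat_one_div_lt (show (0:ℝ) < ε from hε)
      obtain ⟨m', hm'S, hmm'⟩ := hSinf'.exists_gt m
      have h1 : T^[n] z ∈ Metric.cthickening (1/(m'+1)) E :=
        Set.mem_iInter₂.1 (hgmem m') n (by rw [hm'S]; exact hn)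
      rw [Metric.mem_cthickening_iff] at h1
      calc EMetric.infEdist (T^[n] z) E ≤ ENNReal.ofReal (1/(m'+1)) := h1
        _ ≤ ENNReal.ofReal (1/(m+1)) := ENNReal.ofReal_le_ofReal (by
            apply one_div_le_one_div_of_le (by positivity)
            have : (m:ℝ) ≤ (m':ℝ) := by exact_mod_cast hmm'.le
            linarith)
        _ ≤ 0 + (ε : ℝ≥0∞) := by
            rw [zero_add, ← ENNReal.ofReal_coe_nnreal]
            exact ENNReal.ofReal_le_ofReal hm.le
    rwa [hE.closure_eq] at hcl
  have hsub : (S : Finset ℕ) ⊆ (Finset.range N).filter fun n => T^[n] z ∈ E := fun n hn =>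
    Finset.mem_filter.2 ⟨(Finset.mem_powersetCard.1 S.2).1 hn, hmemE n hn⟩
  have hcard := (Finset.card_le_card hsub).trans (hk z)
  rw [(Finset.mem_powersetCard.1 S.2).2] at hcard
  omega

/-- **Lemma 4.4.** Let `(X,T)` be a dynamical system and `E ⊆ X` a closed subset. For any
`δ > 0` there exists an open neighborhood `U` of `E` with `ocap(U) < ocap(E) + δ`. -/
theorem ocap_open_neighborhood {X : Type*} [MetricSpace X] [CompactSpace X]
    (T : X ≃ₜ X) (E : Set X) (hE : IsClosed E) (δ : ℝ) (hδ : 0 < δ) :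
    ∃ U : Set X, IsOpen U ∧ E ⊆ U ∧ ocap ⇑T U < ocap ⇑T E + ENNReal.ofReal δ := by
  
  classical
  have hδ' : (0:ℝ≥0∞) < ENNReal.ofReal δ := ENNReal.ofReal_pos.2 hδ
  have hocap_le : ∀ (A : Set X) (N : ℕ), 0 < N → ocap ⇑T A ≤
      (⨆ x : X, ∑ n ∈ Finset.range N, A.indicator (fun _ => (1 : ℝ≥0∞)) (T^[n] x)) / (N : ℝ≥0∞) :=
    fun A N hN => iInf₂_le N hN
  rcases isEmpty_or_nonempty X with hX | hX
  · refine ⟨Set.univ, isOpen_univ, Set.subset_univ _, ?_⟩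
    have h1 : ocap ⇑T Set.univ ≤ 0 := le_trans (hocap_le _ 1 one_pos) (by simp)
    exact lt_of_le_of_lt h1 (lt_of_lt_of_le hδ' le_add_self)
  have hle1 : ocap ⇑T E ≤ 1 := by
    refine le_trans (hocap_le E 1 one_pos) ?_
    rw [Nat.cast_one, div_one]
    refine iSup_le fun x => ?_
    rw [Finset.sum_range_one]
    simp only [Function.iterate_zero, id_eq]
    by_cases h : x ∈ E <;> simp [Set.indicator_apply, h]
  have hfin : ocap ⇑T E ≠ ⊤ := ne_top_of_le_ne_top ENNReal.one_ne_top hle1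
  have hlt : ocap ⇑T E < ocap ⇑T E + ENNReal.ofReal δ :=
    ENNReal.lt_add_right hfin hδ'.ne'
  obtain ⟨N, hNval⟩ := iInf_lt_iff.mp
    (show (⨅ (N : ℕ) (_ : 0 < N),
      (⨆ x : X, ∑ n ∈ Finset.range N, E.indicator (fun _ => (1 : ℝ≥0∞)) (T^[n] x)) / (N : ℝ≥0∞))
      < ocap ⇑T E + ENNReal.ofReal δ from hlt)
  obtain ⟨hN, hval⟩ := iInf_lt_iff.mp hNval
  set c : X → ℕ := fun x => ((Finset.range N).filter fun n => T^[n] x ∈ E).card with hc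
  have hbdd : BddAbove (Set.range c) := by
    refine ⟨N, ?_⟩
    rintro _ ⟨x, rfl⟩
    simpa using Finset.card_le_card (Finset.filter_subset _ (Finset.range N))
  set k : ℕ := sSup (Set.range c) with hkdef
  obtain ⟨x₀, hx₀⟩ := Nat.sSup_mem (Set.range_nonempty c) hbdd
  have hkle : ∀ x, c x ≤ k := fun x => le_csSup hbdd ⟨x, rfl⟩
  have hkval : (k : ℝ≥0∞) / (N : ℝ≥0∞) < ocap ⇑T E + ENNReal.ofReal δ := by
    refine lt_of_le_of_lt (ENNReal.div_le_div_right ?_ _) hval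
    rw [hkdef, ← hx₀, ← sum_indicator_eq_card]
    exact le_iSup (fun x : X => ∑ n ∈ Finset.range N, E.indicator (fun _ => (1 : ℝ≥0∞)) ((⇑T)^[n] x)) x₀
  obtain ⟨U, hUo, hEU, hU⟩ := key_open ⇑T T.continuous E hE N k hkle
  refine ⟨U, hUo, hEU, lt_of_le_of_lt (le_trans (hocap_le U N hN) ?_) hkval⟩
  refine ENNReal.div_le_div_right (iSup_le fun x => ?_) _
  rw [sum_indicator_eq_card]
  exact_mod_cast hU x
end

section
/- Let (Y,S) be a dynamical system having the small boundary property and let δ > 0. For any open covering Y = V₁ ∪ V₂ ∪ ⋯ ∪ V_m there exist compact subsets E_i ⊂ V_i (1 ≤ i ≤ m) such that E_i ∩ E_j = ∅ for i ≠ j and ocap(Y \ (E₁ ∪ ⋯ ∪ E_m)) < δ. -/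
open scoped ENNReal

section Helpers
open scoped Classical
open Set

variable {Z : Type*}

noncomputable def cnt (f : Z → Z) (A : Set Z) (N : ℕ) (x : Z) : ℕ :=
  ((Finset.range N).filter (fun n => f^[n] x ∈ A)).card

noncomputable def sumInd (f : Z → Z) (A : Set Z) (N : ℕ) (x : Z) : ℝ≥0∞ :=
  ∑ n ∈ Finset.range N, A.indicator (fun _ => (1 : ℝ≥0∞)) (f^[n] x)

lemma sumInd_eq_cnt (f : Z → Z) (A : Set Z) (N : ℕ) (x : Z) :
    sumInd f A N x = (cnt f A N x : ℝ≥0∞) := by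
  rw [cnt, sumInd, Finset.card_filter]
  push_cast
  refine Finset.sum_congr rfl fun n _ => ?_
  by_cases h : f^[n] x ∈ A <;> simp [Set.indicator_apply, h]

lemma sumInd_mono (f : Z → Z) {A B : Set Z} (h : A ⊆ B) (N : ℕ) (x : Z) :
    sumInd f A N x ≤ sumInd f B N x := by
  refine Finset.sum_le_sum fun n _ => ?_
  exact Set.indicator_le_indicator_of_subset h (fun _ => zero_le) _

lemma ocap_le_div (f : Z → Z) (A : Set Z) {N : ℕ} (hN : 0 < N) :
    ocap f A ≤ (⨆ x, sumInd f A N x) / N :=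
  iInf₂_le N hN

lemma ocap_mono (f : Z → Z) {A B : Set Z} (h : A ⊆ B) :
    ocap f A ≤ ocap f B := by
  refine iInf_mono fun N => iInf_mono fun _ => ?_
  exact ENNReal.div_le_div_right (iSup_mono fun x => sumInd_mono f h N x) _

lemma exists_N_of_ocap_zero (f : Z → Z) (A : Set Z)
    (h : ocap f A = 0) {η : ℝ≥0∞} (hη : η ≠ 0) :
    ∃ N, 0 < N ∧ ∀ x, sumInd f A N x ≤ η * N := by
  have h2 : ocap f A < η := h ▸ pos_iff_ne_zero.2 hη
  rw [ocap, iInf_lt_iff] at h2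
  obtain ⟨N, hN⟩ := h2
  rw [iInf_lt_iff] at hN
  obtain ⟨hNpos, hlt⟩ := hN
  refine ⟨N, hNpos, fun x => ?_⟩
  have hNne : (N : ℝ≥0∞) ≠ 0 := by exact_mod_cast hNpos.ne'
  have := (ENNReal.div_lt_iff (Or.inl hNne) (Or.inl (ENNReal.natCast_ne_top N))).1 hlt
  exact le_trans (le_iSup (fun x => sumInd f A N x) x) this.le

lemma sumInd_blocks (f : Z → Z) (A : Set Z) {Nb : ℕ} {c : ℝ≥0∞}
    (hc : ∀ y, sumInd f A Nb y ≤ c) (q : ℕ) (x : Z) :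
    sumInd f A (q * Nb) x ≤ q * c := by
  induction q with
  | zero => simp [sumInd]
  | succ q ih =>
    have : sumInd f A ((q + 1) * Nb) x
        = sumInd f A (q * Nb) x + sumInd f A Nb (f^[q * Nb] x) := by
      rw [sumInd, sumInd, sumInd, add_mul, one_mul, Finset.sum_range_add]
      congr 1
      refine Finset.sum_congr rfl fun n _ => ?_
      rw [add_comm, Function.iterate_add_apply]
    rw [this]
    calc sumInd f A (q * Nb) x + sumInd f A Nb (f^[q * Nb] x)
        ≤ q * c + c := add_le_add ih (hc _)
      _ = (q + 1) * c := by ring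
      _ = ((q + 1 : ℕ) : ℝ≥0∞) * c := by push_cast; ring

lemma sumInd_biUnion {ι : Type*} (f : Z → Z) (s : Finset ι) (A : ι → Set Z) (N : ℕ) (x : Z) :
    sumInd f (⋃ j ∈ s, A j) N x ≤ ∑ j ∈ s, sumInd f (A j) N x := by
  have key : ∀ z : Z, (⋃ j ∈ s, A j).indicator (fun _ => (1:ℝ≥0∞)) z
      ≤ ∑ j ∈ s, (A j).indicator (fun _ => (1:ℝ≥0∞)) z := by
    intro z
    by_cases hz : z ∈ ⋃ j ∈ s, A j
    · obtain ⟨j, hj, hzj⟩ := Set.mem_iUnion₂.1 hz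
      rw [Set.indicator_of_mem hz]
      calc (1:ℝ≥0∞) = (A j).indicator (fun _ => (1:ℝ≥0∞)) z := by
            rw [Set.indicator_of_mem hzj]
        _ ≤ _ := Finset.single_le_sum (f := fun j => (A j).indicator (fun _ => (1:ℝ≥0∞)) z) (fun _ _ => zero_le) hj
    · simp [Set.indicator_of_notMem hz]
  calc sumInd f (⋃ j ∈ s, A j) N x
      ≤ ∑ n ∈ Finset.range N, ∑ j ∈ s, (A j).indicator (fun _ => (1:ℝ≥0∞)) (f^[n] x) :=
        Finset.sum_le_sum fun n _ => key _
    _ = ∑ j ∈ s, sumInd f (A j) N x := Finset.sum_comm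

lemma cnt_mono_set (f : Z → Z) {A B : Set Z} (h : A ⊆ B) (N : ℕ) (x : Z) :
    cnt f A N x ≤ cnt f B N x :=
  Finset.card_le_card (Finset.monotone_filter_right _ (fun n _ hn => h hn))

lemma isClosed_cnt_ge [TopologicalSpace Z] {f : Z → Z} (hf : Continuous f)
    {A : Set Z} (hA : IsClosed A) (N M : ℕ) :
    IsClosed {x : Z | M ≤ cnt f A N x} := by
  have : {x : Z | M ≤ cnt f A N x}
      = ⋃ T ∈ (Finset.range N).powerset.filter (fun T => M ≤ T.card),
          ⋂ n ∈ T, (fun x => f^[n] x) ⁻¹' A := by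
    ext x
    simp only [Set.mem_setOf_eq, Set.mem_iUnion, Set.mem_iInter, Finset.mem_filter,
      Finset.mem_powerset, Set.mem_preimage]
    constructor
    · intro hx
      exact ⟨(Finset.range N).filter (fun n => f^[n] x ∈ A),
        ⟨Finset.filter_subset _ _, hx⟩, fun n hn => (Finset.mem_filter.1 hn).2⟩
    · rintro ⟨T, ⟨hT, hTc⟩, hmem⟩
      refine le_trans hTc (Finset.card_le_card fun n hn => ?_)
      exact Finset.mem_filter.2 ⟨hT hn, hmem n hn⟩
  rw [this]
  refine Set.Finite.isClosed_biUnion (Finset.finite_toSet _) fun T _ => ?_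
  exact isClosed_biInter fun n _ => hA.preimage (hf.iterate n)

lemma exists_cnt_iInter [TopologicalSpace Z] [CompactSpace Z] {f : Z → Z}
    (hf : Continuous f) {F : ℕ → Set Z} (hFcl : ∀ p, IsClosed (F p))
    (hFanti : ∀ p, F (p + 1) ⊆ F p) (N M : ℕ)
    (H : ∀ p, ∃ x, M ≤ cnt f (F p) N x) :
    ∃ x, M ≤ cnt f (⋂ p, F p) N x := by
  have hFle : ∀ p q, p ≤ q → F q ⊆ F p := by
    intro p q hpq
    induction hpq with
    | refl => exact subset_rfl
    | step h ih => exact (hFanti _).trans ih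
  set K : ℕ → Set Z := fun p => {x : Z | M ≤ cnt f (F p) N x} with hK
  have hKcl : ∀ p, IsClosed (K p) := fun p => isClosed_cnt_ge hf (hFcl p) N M
  have hKanti : ∀ p, K (p + 1) ⊆ K p := fun p x hx =>
    le_trans hx (cnt_mono_set f (hFanti p) N x)
  have hne : (⋂ p, K p).Nonempty :=
    IsCompact.nonempty_iInter_of_sequence_nonempty_isCompact_isClosed K hKanti
      (fun p => H p) ((hKcl 0).isCompact) hKcl
  obtain ⟨x, hx⟩ := hne
  simp only [Set.mem_iInter, hK, Set.mem_setOf_eq] at hx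
  -- the finsets T p stabilize
  set T : ℕ → Finset ℕ := fun p => (Finset.range N).filter (fun n => f^[n] x ∈ F p) with hT
  have hTanti : ∀ p q, p ≤ q → T q ⊆ T p := fun p q hpq =>
    Finset.monotone_filter_right _ (fun n _ hn => hFle p q hpq hn)
  obtain ⟨p0, hp0⟩ : ∃ p0, ∀ p, (T p0).card ≤ (T p).card := by
    have hne' : (Set.range fun p => (T p).card).Nonempty := ⟨_, ⟨0, rfl⟩⟩
    obtain ⟨p0, hp0⟩ := Nat.sInf_mem hne'
    refine ⟨p0, fun p => ?_⟩
    calc (T p0).card = sInf (Set.range fun p => (T p).card) := hp0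
      _ ≤ (T p).card := Nat.sInf_le ⟨p, rfl⟩
  have hsub : ∀ p, T p0 ⊆ T p := by
    intro p
    rcases le_total p p0 with h | h
    · exact hTanti p p0 h
    · exact le_of_eq (Finset.eq_of_subset_of_card_le (hTanti p0 p h) (hp0 p)).symm
  refine ⟨x, le_trans (hx p0) ?_⟩
  refine Finset.card_le_card fun n hn => ?_
  have hn' : n ∈ Finset.range N := Finset.mem_filter.1 hn |>.1
  refine Finset.mem_filter.2 ⟨hn', Set.mem_iInter.2 fun p => ?_⟩
  exact (Finset.mem_filter.1 (hsub p hn)).2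

end Helpers

/-- **Lemma 4.6.** Let `(Y,S)` be a dynamical system with the small boundary property and
`δ > 0`. For any open covering `Y = V₁ ∪ ⋯ ∪ V_m` there exist compact sets `E_i ⊆ V_i`
which are pairwise disjoint and satisfy `ocap(Y \ (E₁ ∪ ⋯ ∪ E_m)) < δ`. -/
theorem sbp_disjoint_compact_cover {Y : Type*} [MetricSpace Y] [CompactSpace Y]
    (S : Y ≃ₜ Y) (hsbp : SmallBoundaryProperty ⇑S) (δ : ℝ) (hδ : 0 < δ)
    {m : ℕ} (V : Fin m → Set Y) (hVopen : ∀ i, IsOpen (V i))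
    (hVcover : (⋃ i, V i) = Set.univ) :
    ∃ E : Fin m → Set Y,
      (∀ i, IsCompact (E i)) ∧ (∀ i, E i ⊆ V i) ∧
      (∀ i j : Fin m, i ≠ j → Disjoint (E i) (E j)) ∧
      ocap ⇑S (Set.univ \ ⋃ i, E i) < ENNReal.ofReal δ := by
  classical
  set T : Y → Y := ⇑S with hT
  set δ' : ℝ≥0∞ := ENNReal.ofReal δ with hδ'def
  have hδ'0 : δ' ≠ 0 := (ENNReal.ofReal_pos.2 hδ).ne'
  have hδ'top : δ' ≠ ⊤ := ENNReal.ofReal_ne_top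
  -- Step 1: small-boundary neighborhoods with closure inside a V i
  have h1 : ∀ y : Y, ∃ Wy : Set Y, IsOpen Wy ∧ y ∈ Wy ∧ ocap T (frontier Wy) = 0 ∧
      ∃ i, closure Wy ⊆ V i := by
    intro y
    have hy : y ∈ ⋃ i, V i := hVcover ▸ Set.mem_univ y
    obtain ⟨i, hyi⟩ := Set.mem_iUnion.1 hy
    obtain ⟨r, hr, hball⟩ := Metric.isOpen_iff.1 (hVopen i) y hyi
    obtain ⟨Wy, hWo, hyW, hWsub, hWocap⟩ := hsbp y (Metric.ball y (r / 2))
      Metric.isOpen_ball (by simp [Metric.mem_ball, hr, half_pos hr])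
    refine ⟨Wy, hWo, hyW, hWocap, i, ?_⟩
    calc closure Wy ⊆ closure (Metric.ball y (r / 2)) := closure_mono hWsub
      _ ⊆ Metric.closedBall y (r / 2) := Metric.closure_ball_subset_closedBall
      _ ⊆ Metric.ball y r := Metric.closedBall_subset_ball (by linarith)
      _ ⊆ V i := hball
  choose W hWopen hmemW hWocap hWV using h1
  choose φ0 hφ0 using hWV
  -- Step 2: finite subcover
  obtain ⟨t, ht⟩ := isCompact_univ.elim_finite_subcover W hWopen
    (fun y _ => Set.mem_iUnion.2 ⟨y, hmemW y⟩)
  set l : List Y := t.toList with hl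
  set k : ℕ := l.length with hk
  set Wf : Fin k → Set Y := fun j => W (l.get j) with hWf
  set φ : Fin k → Fin m := fun j => φ0 (l.get j) with hφ
  have hWfopen : ∀ j, IsOpen (Wf j) := fun j => hWopen _
  have hWfocap : ∀ j, ocap T (frontier (Wf j)) = 0 := fun j => hWocap _
  have hWfV : ∀ j, closure (Wf j) ⊆ V (φ j) := fun j => hφ0 _
  have hcov : ∀ y : Y, ∃ j, y ∈ Wf j := by
    intro y
    obtain ⟨z, hzt, hyz⟩ := Set.mem_iUnion₂.1 (ht (Set.mem_univ y))
    obtain ⟨n, hn⟩ := List.mem_iff_get.1 ((Finset.mem_toList).2 hzt)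
    exact ⟨n, by rw [hWf]; simp only; rw [hn]; exact hyz⟩
  -- Step 3: disjointified open sets
  set O : Fin k → Set Y := fun j =>
    Wf j \ ⋃ l' ∈ Finset.univ.filter (fun l' => l' < j), closure (Wf l') with hO
  have hOopen : ∀ j, IsOpen (O j) :=
    fun j => (hWfopen j).sdiff (Set.Finite.isClosed_biUnion (Finset.finite_toSet _)
      (fun _ _ => isClosed_closure))
  have hOdisj : ∀ j j' : Fin k, j ≠ j' → ∀ z, z ∈ O j → z ∈ O j' → False := by
    have key : ∀ j j' : Fin k, j < j' → ∀ z, z ∈ O j → z ∈ O j' → False := by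
      intro j j' hjj' z hzj hzj'
      exact hzj'.2 (Set.mem_iUnion₂.2 ⟨j, by simp [hjj'], subset_closure hzj.1⟩)
    intro j j' hne z hzj hzj'
    rcases hne.lt_or_gt with h | h
    · exact key j j' h z hzj hzj'
    · exact key j' j h z hzj' hzj
  set G : Set Y := ⋃ j ∈ (Finset.univ : Finset (Fin k)), frontier (Wf j) with hG
  have hOG : ∀ y : Y, y ∉ G → ∃ j, y ∈ O j := by
    intro y hyG
    obtain ⟨j1, hj1⟩ := hcov y
    have hPne : (Finset.univ.filter (fun j => y ∈ closure (Wf j))).Nonempty :=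
      ⟨j1, Finset.mem_filter.2 ⟨Finset.mem_univ _, subset_closure hj1⟩⟩
    set j0 := Finset.min' _ hPne with hj0def
    have hj0cl : y ∈ closure (Wf j0) := (Finset.mem_filter.1 (Finset.min'_mem _ hPne)).2
    have hj0mem : y ∈ Wf j0 := by
      by_contra hcon
      exact hyG (Set.mem_iUnion₂.2 ⟨j0, Finset.mem_univ j0,
        (hWfopen j0).frontier_eq ▸ ⟨hj0cl, hcon⟩⟩)
    refine ⟨j0, hj0mem, fun hmem => ?_⟩
    obtain ⟨l', hl', hyl'⟩ := Set.mem_iUnion₂.1 hmem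
    have hl'lt : l' < j0 := by simpa using hl'
    have : j0 ≤ l' := Finset.min'_le (Finset.univ.filter (fun j => y ∈ closure (Wf j))) l' (Finset.mem_filter.2 ⟨Finset.mem_univ _, hyl'⟩)
    exact absurd hl'lt (not_lt.2 this)
  -- Step 4: quantitative bound on the union of boundaries
  set η0 : ℝ≥0∞ := δ' / 4 / (k + 1) with hη0
  have hη0ne : η0 ≠ 0 := by
    rw [hη0]
    refine (ENNReal.div_pos (ENNReal.div_pos hδ'0 (by norm_num)).ne' ?_).ne'
    exact ENNReal.add_ne_top.2 ⟨ENNReal.natCast_ne_top k, ENNReal.one_ne_top⟩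
  have hNj : ∀ j : Fin k, ∃ N, 0 < N ∧ ∀ x, sumInd T (frontier (Wf j)) N x ≤ η0 * N :=
    fun j => exists_N_of_ocap_zero T _ (hWfocap j) hη0ne
  choose Nj hNjpos hNjbound using hNj
  set N : ℕ := ∏ j : Fin k, Nj j with hN
  have hNpos : 0 < N := Finset.prod_pos fun j _ => hNjpos j
  have hblock : ∀ j : Fin k, ∀ x, sumInd T (frontier (Wf j)) N x ≤ η0 * N := by
    intro j x
    have hdvd : Nj j ∣ N := Finset.dvd_prod_of_mem _ (Finset.mem_univ j)
    obtain ⟨q, hq⟩ := hdvd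
    rw [hq, mul_comm (Nj j) q]
    calc sumInd T (frontier (Wf j)) (q * Nj j) x
        ≤ q * (η0 * Nj j) := sumInd_blocks T _ (hNjbound j) q x
      _ = η0 * ((q * Nj j : ℕ) : ℝ≥0∞) := by push_cast; ring
  have hGbound : ∀ x, sumInd T G N x ≤ (δ' / 4) * N := by
    intro x
    calc sumInd T G N x
        ≤ ∑ j : Fin k, sumInd T (frontier (Wf j)) N x := sumInd_biUnion T _ _ N x
      _ ≤ ∑ _j : Fin k, η0 * N := Finset.sum_le_sum fun j _ => hblock j x
      _ = (k : ℝ≥0∞) * (η0 * N) := by rw [Finset.sum_const, Finset.card_univ,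
            Fintype.card_fin, nsmul_eq_mul]
      _ ≤ ((k : ℝ≥0∞) + 1) * ((δ' / 4 / ((k : ℝ≥0∞) + 1)) * N) := by
            rw [hη0]; push_cast; gcongr; simp
      _ = ((k : ℝ≥0∞) + 1) * (δ' / 4 / ((k : ℝ≥0∞) + 1)) * N := by ring
      _ ≤ (δ' / 4) * N := by
            gcongr
            exact ENNReal.mul_div_le
  -- Step 5: the integer threshold M
  set M : ℕ := ⌊((δ' / 4) * N).toReal⌋₊ + 1 with hM
  have hfin : (δ' / 4) * N ≠ ⊤ :=
    ENNReal.mul_ne_top (by rw [div_eq_mul_inv]; exact ENNReal.mul_ne_top hδ'top (by simp))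
      (ENNReal.natCast_ne_top N)
  have hMgt : (δ' / 4) * N < (M : ℝ≥0∞) := by
    conv_lhs => rw [← ENNReal.ofReal_toReal hfin]
    rw [show ((M : ℝ≥0∞)) = ENNReal.ofReal (M : ℝ) from (ENNReal.ofReal_natCast M).symm]
    refine ENNReal.ofReal_lt_ofReal_iff (by exact_mod_cast Nat.succ_pos _) |>.2 ?_
    push_cast [hM]
    exact Nat.lt_floor_add_one _
  have hM1le : ((M - 1 : ℕ) : ℝ≥0∞) ≤ (δ' / 4) * N := by
    have h1 : ((M - 1 : ℕ) : ℝ) ≤ ((δ' / 4) * N).toReal := by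
      rw [hM]
      simp only [Nat.add_sub_cancel]
      exact Nat.floor_le ENNReal.toReal_nonneg
    calc ((M - 1 : ℕ) : ℝ≥0∞) = ENNReal.ofReal ((M - 1 : ℕ) : ℝ) := by
          rw [ENNReal.ofReal_natCast]
      _ ≤ ENNReal.ofReal (((δ' / 4) * N).toReal) := ENNReal.ofReal_le_ofReal h1
      _ = (δ' / 4) * N := ENNReal.ofReal_toReal hfin
  have hGcnt : ∀ x, cnt T G N x < M := by
    intro x
    have := (sumInd_eq_cnt T G N x) ▸ (hGbound x)
    exact_mod_cast lt_of_le_of_lt this hMgt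
  -- Step 6: the shrinking closed/open sets
  set Cc : Fin k → ℕ → Set Y := fun j p =>
    {y : Y | ((p : ℝ≥0∞) + 1)⁻¹ ≤ EMetric.infEdist y (O j)ᶜ} with hCc
  set Co : Fin k → ℕ → Set Y := fun j p =>
    {y : Y | ((p : ℝ≥0∞) + 1)⁻¹ < EMetric.infEdist y (O j)ᶜ} with hCo
  have hCoCc : ∀ j p, Co j p ⊆ Cc j p := by
    intro j p y hy
    simp only [hCo, Set.mem_setOf_eq] at hy
    simp only [hCc, Set.mem_setOf_eq]
    exact le_of_lt hy
  have hCcO : ∀ j p, Cc j p ⊆ O j := by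
    intro j p y hy
    by_contra hcon
    have h0 : EMetric.infEdist y (O j)ᶜ = 0 := EMetric.infEdist_zero_of_mem hcon
    rw [hCc] at hy
    simp only [Set.mem_setOf_eq, h0, nonpos_iff_eq_zero] at hy
    exact (ENNReal.inv_ne_zero.2 (by simp)) hy
  have hCcclosed : ∀ j p, IsClosed (Cc j p) :=
    fun j p => isClosed_le continuous_const EMetric.continuous_infEdist
  have hCoopen : ∀ j p, IsOpen (Co j p) :=
    fun j p => isOpen_lt continuous_const EMetric.continuous_infEdist
  have hOCo : ∀ j, ∀ y ∈ O j, ∃ p, y ∈ Co j p := by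
    intro j y hy
    have hpos : 0 < EMetric.infEdist y (O j)ᶜ := by
      refine EMetric.infEdist_pos_iff_notMem_closure.2 ?_
      rw [(hOopen j).isClosed_compl.closure_eq]
      exact fun h => h hy
    obtain ⟨n, hn⟩ := ENNReal.exists_inv_nat_lt hpos.ne'
    refine ⟨n, lt_of_le_of_lt ?_ hn⟩
    exact ENNReal.inv_le_inv.2 (by simp)
  set F : ℕ → Set Y := fun p => Set.univ \ ⋃ j, Co j p with hF
  have hFclosed : ∀ p, IsClosed (F p) := by
    intro p
    have : F p = (⋃ j, Co j p)ᶜ := by rw [hF]; simp [Set.compl_eq_univ_diff]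
    rw [this]
    exact (isOpen_iUnion fun j => hCoopen j p).isClosed_compl
  have hFanti : ∀ p, F (p + 1) ⊆ F p := by
    intro p y hy
    refine ⟨Set.mem_univ y, fun hmem => ?_⟩
    obtain ⟨j, hj⟩ := Set.mem_iUnion.1 hmem
    refine hy.2 (Set.mem_iUnion.2 ⟨j, ?_⟩)
    simp only [hCo, Set.mem_setOf_eq] at hj ⊢
    refine lt_of_le_of_lt (ENNReal.inv_le_inv.2 ?_) hj
    push_cast
    exact le_self_add
  have hFG : (⋂ p, F p) ⊆ G := by
    intro y hy
    by_contra hyG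
    obtain ⟨j, hj⟩ := hOG y hyG
    obtain ⟨p, hp⟩ := hOCo j y hj
    exact (Set.mem_iInter.1 hy p).2 (Set.mem_iUnion.2 ⟨j, hp⟩)
  -- Step 7: find p with small count on F p
  have hSc : Continuous T := S.continuous
  obtain ⟨p, hp⟩ : ∃ p, ∀ x, cnt T (F p) N x < M := by
    by_contra hcon
    push_neg at hcon
    obtain ⟨x, hx⟩ := exists_cnt_iInter hSc hFclosed hFanti N M hcon
    have := le_trans hx (cnt_mono_set T hFG N x)
    exact absurd this (not_le.2 (hGcnt x))
  -- Step 8: assemble E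
  set E : Fin m → Set Y := fun i =>
    ⋃ j ∈ Finset.univ.filter (fun j => φ j = i), Cc j p with hE
  refine ⟨E, ?_, ?_, ?_, ?_⟩
  · intro i
    exact Set.Finite.isCompact_biUnion (Finset.finite_toSet _)
      (fun j _ => (hCcclosed j p).isCompact)
  · intro i
    refine Set.iUnion₂_subset fun j hj => ?_
    have hji : φ j = i := by simpa using hj
    exact hji ▸ ((hCcO j p).trans ((Set.diff_subset).trans
      (subset_closure.trans (hWfV j))))
  · intro i i' hii'
    rw [Set.disjoint_left]
    intro z hz hz'
    obtain ⟨j, hj, hzj⟩ := Set.mem_iUnion₂.1 hz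
    obtain ⟨j', hj', hzj'⟩ := Set.mem_iUnion₂.1 hz'
    have hφj : φ j = i := by simpa using hj
    have hφj' : φ j' = i' := by simpa using hj'
    have hne : j ≠ j' := fun h => hii' (hφj ▸ hφj' ▸ h ▸ rfl)
    exact hOdisj j j' hne z (hCcO j p hzj) (hCcO j' p hzj')
  · have hsub : Set.univ \ ⋃ i, E i ⊆ F p := by
      intro z hz
      refine ⟨Set.mem_univ z, fun hmem => ?_⟩
      obtain ⟨j, hj⟩ := Set.mem_iUnion.1 hmem
      refine hz.2 (Set.mem_iUnion.2 ⟨φ j, ?_⟩)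
      exact Set.mem_iUnion₂.2 ⟨j, by simp, hCoCc j p hj⟩
    have hcntF : ∀ x, sumInd T (F p) N x ≤ ((M - 1 : ℕ) : ℝ≥0∞) := by
      intro x
      rw [sumInd_eq_cnt]
      exact_mod_cast Nat.le_sub_one_of_lt (hp x)
    calc ocap T (Set.univ \ ⋃ i, E i)
        ≤ ocap T (F p) := ocap_mono T hsub
      _ ≤ (⨆ x, sumInd T (F p) N x) / N := ocap_le_div T _ hNpos
      _ ≤ ((M - 1 : ℕ) : ℝ≥0∞) / N := by gcongr; exact iSup_le hcntF
      _ ≤ ((δ' / 4) * N) / N := by gcongr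
      _ ≤ δ' / 4 := by
          rw [mul_comm, div_eq_mul_inv, mul_assoc, ← div_eq_mul_inv]
          exact ENNReal.mul_div_le
      _ < δ' := by
          have h42 : δ' / 4 ≤ δ' / 2 := by
            rw [div_eq_mul_inv, div_eq_mul_inv]
            exact mul_le_mul_right (ENNReal.inv_le_inv.2 (by norm_num)) δ'
          exact lt_of_le_of_lt h42 (ENNReal.half_lt_self hδ'0 hδ'top)
end
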